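/- arXiv:math-ph/0309054 — 3 statements merged into one kernel-verified Lean document; each statement's English description precedes it below -/
import Mathlib

section
/- Let Λ ⊆ ℝ be a Delaunay set with finite local complexity, enumerated as a strictly increasing sequence (λ_n)_{n∈ℤ}, let s ≥ 2, and for each n let B_n be the unique function in V_0^{(s)}(Λ) with support [λ_n, λ_{n+s}] and ∫ B_n = (λ_{n+s} − λ_n)/s (the B-spline of order s at λ_n). Then the set of translated shapes { x ↦ B_n(x + λ_n) : n ∈ ℤ } is a finite set of compactly supported functions. -/
open MeasureTheory Set Filter

noncomputable section

def UniformlyDiscrete (Λ : Set ℝ) : Prop :=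
  ∃ r > 0, ∀ x ∈ Λ, ∀ y ∈ Λ, x ≠ y → r ≤ |x - y|

def RelativelyDense (Λ : Set ℝ) : Prop :=
  ∃ R > 0, ∀ x : ℝ, ∃ y ∈ Λ, |x - y| ≤ R

def Delaunay (Λ : Set ℝ) : Prop := UniformlyDiscrete Λ ∧ RelativelyDense Λ

def FiniteLocalComplexity (Λ : Set ℝ) : Prop :=
  ∀ R > 0, {S : Set ℝ | ∃ l ∈ Λ, S = ((fun x => x - l) '' Λ) ∩ Set.Ioo (-R) R}.Finite

/-- The space `V_0^{(s)}(Λ)` of splines of order `s` with nodes at the points `lam n`: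
functions in `L²(ℝ)` of class `C^{s-2}` that restrict to a polynomial of degree `≤ s-1`
on each interval `[lam n, lam (n+1)]`. -/
def SplineSpace (lam : ℤ → ℝ) (s : ℕ) : Set (ℝ → ℝ) :=
  {f | MemLp f 2 volume ∧ ContDiff ℝ (s - 2 : ℕ) f ∧
    ∀ n : ℤ, ∃ p : Polynomial ℝ, p.degree ≤ (s - 1 : ℕ) ∧
      ∀ x ∈ Set.Icc (lam n) (lam (n + 1)), f x = p.eval x}

/-- The squared `L²` norm of a (square-integrable) function. -/
def l2sq (f : ℝ → ℝ) : ℝ := ∫ x : ℝ, (f x) ^ 2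

/-- `v` is a Riesz basis of the subspace `V` of `L²(ℝ)`: every `v i` lies in `V`,
there are frame constants `0 < A ≤ B` for all finite linear combinations,
and finite linear combinations of the `v i` are `L²`-dense in `V`. -/
def IsRieszBasisOf {ι : Type} (V : Set (ℝ → ℝ)) (v : ι → ℝ → ℝ) : Prop :=
  (∀ i, v i ∈ V) ∧
  (∃ A B : ℝ, 0 < A ∧ A ≤ B ∧
    ∀ (t : Finset ι) (a : ι → ℝ),
      A * ∑ i ∈ t, (a i) ^ 2 ≤ l2sq (fun x => ∑ i ∈ t, a i * v i x) ∧
      l2sq (fun x => ∑ i ∈ t, a i * v i x) ≤ B * ∑ i ∈ t, (a i) ^ 2) ∧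
  (∀ f ∈ V, ∀ ε > 0, ∃ (t : Finset ι) (a : ι → ℝ),
      l2sq (fun x => f x - ∑ i ∈ t, a i * v i x) < ε)

open Polynomial Set Finset MeasureTheory

lemma poly_eq_C_mul_pow {d : Polynomial ℝ} {k : ℕ} {t : ℝ} (hdeg : d.natDegree ≤ k)
    (hder : ∀ j < k, (Polynomial.derivative^[j] d).eval t = 0) :
    ∃ c : ℝ, d = Polynomial.C c * (Polynomial.X - Polynomial.C t) ^ k := by
  set u := taylor t d with hu
  have hcoeff : ∀ j < k, u.coeff j = 0 := by
    intro j hj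
    have h1 : u.coeff j = (hasseDeriv j d).eval t := taylor_coeff (r := t) (f := d) j
    have h2 : (Nat.factorial j : ℝ) * (hasseDeriv j d).eval t
        = (Polynomial.derivative^[j] d).eval t := by
      have h3 := congrFun (factorial_smul_hasseDeriv (R := ℝ) (k := j)) d
      calc (Nat.factorial j : ℝ) * (hasseDeriv j d).eval t
          = ((Nat.factorial j • hasseDeriv (R := ℝ) j) d).eval t := by
            simp [nsmul_eq_mul]
        _ = _ := by rw [h3]
    have hj0 : (Nat.factorial j : ℝ) ≠ 0 := by positivity
    rw [h1]
    have h4 := hder j hj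
    rw [h4] at h2
    exact (mul_eq_zero.mp h2).resolve_left hj0
  have hudeg : u.natDegree ≤ k := by rw [hu, natDegree_taylor]; exact hdeg
  have huC : u = Polynomial.C (u.coeff k) * X ^ k := by
    ext i
    rw [coeff_C_mul, coeff_X_pow]
    rcases lt_trichotomy i k with h | h | h
    · simp [hcoeff i h, h.ne]
    · simp [h]
    · simp [coeff_eq_zero_of_natDegree_lt (lt_of_le_of_lt hudeg h), h.ne']
  refine ⟨u.coeff k, ?_⟩
  have hd : d = taylor (-t) u := by
    rw [hu, taylor_taylor, neg_add_cancel, taylor_zero]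
  rw [hd, huC, taylor_apply, mul_comp, pow_comp, C_comp, X_comp]
  rw [map_neg, ← sub_eq_add_neg]
  simp

lemma vandermonde_coeffs {k : ℕ} {t : ℕ → ℝ} (ht : Set.InjOn t (Finset.range (k+1) : Finset ℕ))
    {c : ℕ → ℝ}
    (hsum : ∑ i ∈ Finset.range (k+1), Polynomial.C (c i) * (Polynomial.X - Polynomial.C (t i)) ^ k
      = 0) :
    ∀ i ∈ Finset.range (k+1), c i = 0 := by
  -- step down in the exponent
  have down : ∀ j : ℕ,
      (∑ i ∈ Finset.range (k+1), Polynomial.C (c i) * (Polynomial.X - Polynomial.C (t i)) ^ (j+1) = 0) →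
      ∑ i ∈ Finset.range (k+1), Polynomial.C (c i) * (Polynomial.X - Polynomial.C (t i)) ^ j = 0 := by
    intro j hj
    have hder := congrArg Polynomial.derivative hj
    rw [map_sum, map_zero] at hder
    have : ∀ i ∈ Finset.range (k+1),
        Polynomial.derivative (Polynomial.C (c i) * (Polynomial.X - Polynomial.C (t i)) ^ (j+1))
        = Polynomial.C ((j:ℝ)+1) * (Polynomial.C (c i) * (Polynomial.X - Polynomial.C (t i)) ^ j) := by
      intro i _
      rw [derivative_C_mul, derivative_X_sub_C_pow]
      push_cast
      ring
    rw [Finset.sum_congr rfl this, ← Finset.mul_sum] at hder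
    have hne : (Polynomial.C ((j:ℝ)+1)) ≠ 0 := by
      simp only [ne_eq, Polynomial.C_eq_zero]
      positivity
    exact (mul_eq_zero.mp hder).resolve_left hne
  have all : ∀ d j : ℕ, j + d = k →
      ∑ i ∈ Finset.range (k+1), Polynomial.C (c i) * (Polynomial.X - Polynomial.C (t i)) ^ j = 0 := by
    intro d
    induction d with
    | zero => intro j hj; rw [Nat.add_zero] at hj; rw [hj]; exact hsum
    | succ d ih => intro j hj; exact down j (ih (j+1) (by omega))
  have moments : ∀ j ≤ k, ∑ i ∈ Finset.range (k+1), c i * (t i) ^ j = 0 := by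
    intro j hj
    have h0 := congrArg (Polynomial.eval 0) (all (k - j) j (by omega))
    rw [Polynomial.eval_finset_sum, Polynomial.eval_zero] at h0
    simp only [Polynomial.eval_mul, Polynomial.eval_C, Polynomial.eval_pow, Polynomial.eval_sub,
      Polynomial.eval_X] at h0
    have h1 : ∀ i ∈ Finset.range (k+1), c i * ((0:ℝ) - t i)^j = (-1:ℝ)^j * (c i * (t i)^j) := by
      intro i _
      rw [zero_sub, neg_pow]
      ring
    rw [Finset.sum_congr rfl h1, ← Finset.mul_sum] at h0
    rcases mul_eq_zero.mp h0 with h | h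
    · exact absurd h (pow_ne_zero _ (by norm_num))
    · exact h
  have evalq : ∀ q : Polynomial ℝ, q.natDegree < k + 1 →
      ∑ i ∈ Finset.range (k+1), c i * q.eval (t i) = 0 := by
    intro q hq
    have : ∀ i ∈ Finset.range (k+1), c i * q.eval (t i)
        = ∑ j ∈ Finset.range (k+1), q.coeff j * (c i * (t i)^j) := by
      intro i _
      rw [Polynomial.eval_eq_sum_range' hq, Finset.mul_sum]
      exact Finset.sum_congr rfl (fun j _ => by ring)
    rw [Finset.sum_congr rfl this, Finset.sum_comm]
    refine Finset.sum_eq_zero (fun j hj => ?_)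
    rw [← Finset.mul_sum, moments j (by simpa using Nat.lt_succ_iff.mp (Finset.mem_range.mp hj))]
    ring
  intro i0 hi0
  have hdeg : (Lagrange.basis (Finset.range (k+1)) t i0).natDegree < k + 1 := by
    rw [Lagrange.natDegree_basis ht hi0]
    simp [Finset.card_range]
  have := evalq _ hdeg
  rw [Finset.sum_eq_single i0 (fun i hi hne =>
    by rw [Lagrange.eval_basis_of_ne hne.symm hi, mul_zero]) (fun h => absurd hi0 h)] at this
  rwa [Lagrange.eval_basis_self ht hi0, mul_one] at this

lemma eqOn_iteratedDeriv_poly {f : ℝ → ℝ} {N : ℕ} (hf : ContDiff ℝ N f) {q : Polynomial ℝ}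
    {a b : ℝ} (hab : a < b) (heq : ∀ x ∈ Set.Icc a b, f x = q.eval x) :
    ∀ j ≤ N, ∀ x ∈ Set.Icc a b, iteratedDeriv j f x = (Polynomial.derivative^[j] q).eval x := by
  have interior : ∀ j, j ≤ N → ∀ x ∈ Set.Ioo a b,
      iteratedDeriv j f x = (Polynomial.derivative^[j] q).eval x := by
    intro j
    induction j with
    | zero =>
      intro _ x hx
      simpa using heq x (Set.Ioo_subset_Icc_self hx)
    | succ j ih =>
      intro hjN x hx
      have hIH : (iteratedDeriv j f) =ᶠ[nhds x] fun y => (Polynomial.derivative^[j] q).eval y :=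
        Filter.eventuallyEq_of_mem (Ioo_mem_nhds hx.1 hx.2)
          (fun y hy => ih (Nat.le_of_succ_le hjN) y hy)
      rw [iteratedDeriv_succ]
      rw [hIH.deriv_eq, Polynomial.deriv, Function.iterate_succ_apply']
  intro j hj
  have hcont : Continuous (iteratedDeriv j f) := hf.continuous_iteratedDeriv j (by exact_mod_cast hj)
  have hcont2 : Continuous fun y => (Polynomial.derivative^[j] q).eval y :=
    (Polynomial.derivative^[j] q).continuous
  have h2 : Set.EqOn (iteratedDeriv j f) (fun y => (Polynomial.derivative^[j] q).eval y)
      (closure (Set.Ioo a b)) :=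
    Set.EqOn.closure (fun x hx => interior j hj x hx) hcont hcont2
  rw [closure_Ioo hab.ne] at h2
  exact fun x hx => h2 hx

lemma poly_antideriv (p : Polynomial ℝ) :
    ∃ P : Polynomial ℝ, Polynomial.derivative P = p ∧ P.natDegree ≤ p.natDegree + 1 := by
  refine ⟨∑ j ∈ Finset.range (p.natDegree + 1),
    Polynomial.C (p.coeff j / (j + 1)) * Polynomial.X ^ (j + 1), ?_, ?_⟩
  · rw [map_sum]
    have : ∀ j ∈ Finset.range (p.natDegree + 1),
        Polynomial.derivative (Polynomial.C (p.coeff j / (j+1)) * Polynomial.X ^ (j+1))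
        = Polynomial.C (p.coeff j) * Polynomial.X ^ j := by
      intro j _
      rw [derivative_C_mul, derivative_X_pow]
      simp only [Nat.add_sub_cancel]
      rw [← mul_assoc, ← Polynomial.C_mul]
      congr 1
      push_cast
      have : (j:ℝ) + 1 ≠ 0 := by positivity
      field_simp
    rw [Finset.sum_congr rfl this]
    conv_rhs => rw [p.as_sum_range' (p.natDegree + 1) (Nat.lt_succ_self _)]
    exact Finset.sum_congr rfl (fun j _ => Polynomial.C_mul_X_pow_eq_monomial)
  · refine Polynomial.natDegree_sum_le_of_forall_le _ _ (fun j hj => ?_)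
    calc (Polynomial.C (p.coeff j / (j+1)) * Polynomial.X ^ (j+1)).natDegree
        ≤ (Polynomial.C (p.coeff j / (j+1))).natDegree + (Polynomial.X ^ (j+1) : Polynomial ℝ).natDegree :=
          Polynomial.natDegree_mul_le
      _ ≤ p.natDegree + 1 := by
          rw [Polynomial.natDegree_C, Polynomial.natDegree_X_pow]
          simp only [zero_add]
          exact Nat.succ_le_succ (Nat.lt_succ_iff.mp (Finset.mem_range.mp hj))

lemma spline_uniqueness (m : ℕ) (t : ℕ → ℝ) (ht : ∀ i < m + 2, t i < t (i + 1))
    (h : ℝ → ℝ) (hsm : ContDiff ℝ (m : ℕ) h)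
    (hz : ∀ x, x ∉ Set.Icc (t 0) (t (m + 2)) → h x = 0)
    (hp : ∀ i < m + 2, ∃ p : Polynomial ℝ, p.natDegree ≤ m + 1 ∧
      ∀ x ∈ Set.Icc (t i) (t (i + 1)), h x = p.eval x)
    (hint : (∫ x : ℝ, h x) = 0) : ∀ x, h x = 0 := by
  -- monotonicity facts
  have tmono : ∀ i j : ℕ, i < j → j ≤ m + 2 → t i < t j := by
    intro i j hij hj
    induction j with
    | zero => omega
    | succ j ih =>
      rcases Nat.lt_or_ge i j with hij' | hij'
      · exact lt_trans (ih hij' (by omega)) (ht j (by omega))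
      · have : i = j := by omega
        subst this
        exact ht i (by omega)
  have tmono' : ∀ i j : ℕ, i ≤ j → j ≤ m + 2 → t i ≤ t j := by
    intro i j hij hj
    rcases eq_or_lt_of_le hij with rfl | hlt
    · exact le_refl _
    · exact (tmono i j hlt hj).le
  have hcont : Continuous h := hsm.continuous
  -- vanishing outside the open interval
  have hz' : ∀ x, x ∉ Set.Ioo (t 0) (t (m + 2)) → h x = 0 := by
    have h1 : Set.EqOn h (fun _ => (0:ℝ)) ((Set.Icc (t 0) (t (m+2)))ᶜ) := fun x hx => hz x hx
    have h2 := h1.closure hcont continuous_const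
    rw [closure_compl, interior_Icc] at h2
    exact fun x hx => h2 hx
  -- compact support & integrability
  have hcs : HasCompactSupport h :=
    HasCompactSupport.intro isCompact_Icc hz
  have hintg : Integrable h := hcont.integrable_of_hasCompactSupport hcs
  -- the antiderivative
  set H : ℝ → ℝ := fun x => ∫ u in (t 0)..x, h u with hH
  have hHd : ∀ x, HasDerivAt H (h x) x := by
    intro x
    exact intervalIntegral.integral_hasDerivAt_right (hcont.intervalIntegrable _ _)
      (hcont.stronglyMeasurableAtFilter _ _) hcont.continuousAt
  have hderivH : deriv H = h := funext fun x => (hHd x).deriv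
  have hHdiff : Differentiable ℝ H := fun x => (hHd x).differentiableAt
  have hHsm : ContDiff ℝ ((m : ℕ) + 1 : ℕ) H := by
    have : ((m + 1 : ℕ) : WithTop ℕ∞) = (m : WithTop ℕ∞) + 1 := by push_cast; rfl
    rw [this, contDiff_succ_iff_deriv]
    refine ⟨hHdiff, ?_, ?_⟩
    · intro hω
      exfalso
      exact (by simp : ((m : WithTop ℕ∞) ≠ ⊤)) hω
    · rw [hderivH]; exact hsm
  -- left tail
  have hHleft : ∀ x, x ≤ t 0 → H x = 0 := by
    intro x hx
    rw [hH]
    have : Set.EqOn h (fun _ => (0:ℝ)) (Set.uIcc (t 0) x) := by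
      intro y hy
      rw [Set.uIcc_of_ge hx] at hy
      exact hz' y (fun hmem => absurd hmem.1 (not_lt.mpr hy.2))
    simp only
    rw [intervalIntegral.integral_congr this, intervalIntegral.integral_const, smul_zero]
  -- right tail
  have hHright : ∀ x, t (m + 2) ≤ x → H x = 0 := by
    intro x hx
    have h0x : t 0 ≤ x := le_trans (tmono' 0 (m+2) (by omega) le_rfl) hx
    rw [hH]
    simp only
    rw [intervalIntegral.integral_of_le h0x,
      MeasureTheory.setIntegral_eq_integral_of_forall_compl_eq_zero, hint]
    intro y hy
    rw [Set.mem_Ioc, not_and_or] at hy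
    apply hz'
    rintro ⟨hy1, hy2⟩
    rcases hy with hy | hy
    · exact hy hy1
    · exact hy (le_trans hy2.le hx)
  -- the polynomial pieces of H
  have hQ : ∀ i < m + 2, ∃ Q : Polynomial ℝ, Q.natDegree ≤ m + 2 ∧
      ∀ x ∈ Set.Icc (t i) (t (i + 1)), H x = Q.eval x := by
    intro i hi
    obtain ⟨p, hpdeg, hpe⟩ := hp i hi
    obtain ⟨P, hPd, hPdeg⟩ := poly_antideriv p
    refine ⟨P + Polynomial.C (H (t i) - P.eval (t i)), ?_, ?_⟩
    · refine le_trans (Polynomial.natDegree_add_le _ _) ?_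
      simp only [Polynomial.natDegree_C, sup_le_iff]
      exact ⟨le_trans hPdeg (by omega), by omega⟩
    · intro x hx
      have hksub : Set.uIcc (t i) x ⊆ Set.Icc (t i) (t (i + 1)) := by
        rw [Set.uIcc_of_le hx.1]
        exact Set.Icc_subset_Icc le_rfl hx.2
      have key : H x - H (t i) = ∫ u in (t i)..x, h u := by
        rw [hH]
        simp only
        rw [← intervalIntegral.integral_add_adjacent_intervals
          (hcont.intervalIntegrable (t 0) (t i)) (hcont.intervalIntegrable (t i) x)]
        ring
      have key2 : (∫ u in (t i)..x, h u) = (∫ u in (t i)..x, p.eval u) :=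
        intervalIntegral.integral_congr (fun y hy => hpe y (hksub hy))
      have key3 : (∫ u in (t i)..x, p.eval u) = P.eval x - P.eval (t i) := by
        apply intervalIntegral.integral_eq_sub_of_hasDerivAt
        · intro y _
          have := P.hasDerivAt y
          rwa [hPd] at this
        · exact (Polynomial.continuous p).intervalIntegrable _ _
      rw [Polynomial.eval_add, Polynomial.eval_C]
      have := key.trans (key2.trans key3)
      linarith
  choose Q hQdeg hQe using hQ
  -- extended piece list
  set G : ℕ → Polynomial ℝ := fun i => if h1 : i = 0 then 0 else if h2 : i ≤ m + 2 then Q (i-1) (by omega) else 0 with hG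
  -- matching conditions at the knots
  have match_left : ∀ i ≤ m + 2, ∀ j ≤ m + 1,
      iteratedDeriv j H (t i) = (Polynomial.derivative^[j] (G i)).eval (t i) := by
    intro i hi j hj
    rcases Nat.eq_zero_or_pos i with rfl | hi0
    · -- G 0 = 0, H = 0 on [t 0 - 1, t 0]
      have heval : ∀ x ∈ Set.Icc (t 0 - 1) (t 0), H x = (0 : Polynomial ℝ).eval x := by
        intro x hx
        rw [Polynomial.eval_zero]
        exact hHleft x hx.2
      have := eqOn_iteratedDeriv_poly hHsm (by linarith : t 0 - 1 < t 0) heval j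
        (by exact_mod_cast hj) (t 0) ⟨by linarith, le_refl _⟩
      rw [this]
      simp [hG]
    · have hi1 : i - 1 < m + 2 := by omega
      have hGi : G i = Q (i-1) hi1 := by
        rw [hG]
        simp only
        rw [dif_neg (by omega), dif_pos hi]
      have hlt : t (i-1) < t i := by
        have h1 := ht (i-1) hi1
        have h2 : i - 1 + 1 = i := by omega
        rwa [h2] at h1
      have heval : ∀ x ∈ Set.Icc (t (i-1)) (t i), H x = (Q (i-1) hi1).eval x := by
        have h2 : i - 1 + 1 = i := by omega
        have := hQe (i-1) hi1
        rwa [h2] at this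
      have := eqOn_iteratedDeriv_poly hHsm hlt heval j (by exact_mod_cast hj) (t i)
        ⟨hlt.le, le_refl _⟩
      rw [this, hGi]
  have match_right : ∀ i ≤ m + 2, ∀ j ≤ m + 1,
      iteratedDeriv j H (t i) = (Polynomial.derivative^[j] (G (i+1))).eval (t i) := by
    intro i hi j hj
    rcases Nat.lt_or_ge i (m + 2) with hi2 | hi2
    · have hGi : G (i+1) = Q i hi2 := by
        rw [hG]
        simp only
        rw [dif_neg (by omega), dif_pos (by omega)]
        rfl
      rw [hGi]
      have := eqOn_iteratedDeriv_poly hHsm (ht i hi2) (hQe i hi2) j (by exact_mod_cast hj) (t i)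
        ⟨le_refl _, (ht i hi2).le⟩
      rw [this]
    · have hieq : i = m + 2 := by omega
      subst hieq
      have hGi : G (m + 3) = 0 := by
        rw [hG]
        simp only
        rw [dif_neg (by omega), dif_neg (by omega)]
      rw [hGi]
      have heval : ∀ x ∈ Set.Icc (t (m+2)) (t (m+2) + 1), H x = (0 : Polynomial ℝ).eval x := by
        intro x hx
        rw [Polynomial.eval_zero]
        exact hHright x hx.1
      have := eqOn_iteratedDeriv_poly hHsm (by linarith : t (m+2) < t (m+2) + 1) heval j
        (by exact_mod_cast hj) (t (m+2)) ⟨le_refl _, by linarith⟩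
      rw [this]
  have hGdeg : ∀ i, (G i).natDegree ≤ m + 2 := by
    intro i
    rw [hG]
    simp only
    split
    · simp
    · split
      · exact le_trans (hQdeg _ _) le_rfl
      · simp
  have hd : ∀ i : ℕ, ∃ c : ℝ, i ≤ m + 2 →
      G (i+1) - G i = Polynomial.C c * (Polynomial.X - Polynomial.C (t i)) ^ (m+2) := by
    intro i
    rcases Nat.lt_or_ge (m + 2) i with hi | hi
    · exact ⟨0, fun hcon => absurd hcon (by omega)⟩
    · obtain ⟨c, hc⟩ := poly_eq_C_mul_pow (d := G (i+1) - G i) (k := m + 2) (t := t i)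
        (le_trans (Polynomial.natDegree_sub_le _ _) (by simp [hGdeg]))
        (by
          intro j hj
          rw [Polynomial.iterate_derivative_sub, Polynomial.eval_sub,
            ← match_right i hi j (by omega), ← match_left i hi j (by omega), sub_self])
      exact ⟨c, fun _ => hc⟩
  choose c hc using hd
  have hsum : ∑ i ∈ Finset.range (m + 3),
      Polynomial.C (c i) * (Polynomial.X - Polynomial.C (t i)) ^ (m+2) = 0 := by
    have h1 : ∀ i ∈ Finset.range (m + 3),
        Polynomial.C (c i) * (Polynomial.X - Polynomial.C (t i)) ^ (m+2) = G (i+1) - G i := by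
      intro i hi
      exact (hc i (by have := Finset.mem_range.mp hi; omega)).symm
    rw [Finset.sum_congr rfl h1, Finset.sum_range_sub G (m+3)]
    have hG0 : G 0 = 0 := by rw [hG]; simp
    have hGm3 : G (m+3) = 0 := by rw [hG]; simp only; rw [dif_neg (by omega), dif_neg (by omega)]
    rw [hG0, hGm3, sub_zero]
  have hinj : Set.InjOn t (Finset.range (m + 2 + 1) : Finset ℕ) := by
    intro a ha b hb hab
    by_contra hne
    have ha' : a ≤ m + 2 := by
      simpa using ha
    have hb' : b ≤ m + 2 := by
      simpa using hb
    rcases Nat.lt_or_ge a b with hlt | hge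
    · exact absurd hab (tmono a b hlt hb').ne
    · have : b < a := by omega
      exact absurd hab.symm (tmono b a this ha').ne
  have hc0 : ∀ i ∈ Finset.range (m + 3), c i = 0 := by
    have := vandermonde_coeffs (k := m + 2) hinj (c := c) (by exact_mod_cast hsum)
    exact fun i hi => this i (by simp at hi ⊢; omega)
  have hGeq : ∀ i ≤ m + 2, G (i + 1) = G i := by
    intro i hi
    have h1 := hc i hi
    rw [hc0 i (Finset.mem_range.mpr (by omega))] at h1
    have := h1
    rw [map_zero, zero_mul] at this
    exact sub_eq_zero.mp this
  have hGall : ∀ i ≤ m + 3, G i = 0 := by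
    intro i hi
    induction i with
    | zero => rw [hG]; simp
    | succ i ih =>
      rw [hGeq i (by omega)]
      exact ih (by omega)
  have hQ0 : ∀ (i : ℕ) (hi : i < m + 2), Q i hi = 0 := by
    intro i hi
    have h1 : G (i + 1) = Q i hi := by
      rw [hG]
      simp only
      rw [dif_neg (by omega), dif_pos (by omega)]
      rfl
    rw [← h1]
    exact hGall (i+1) (by omega)
  have hHmid : ∀ i ≤ m + 2, ∀ x ∈ Set.Icc (t 0) (t i), H x = 0 := by
    intro i
    induction i with
    | zero =>
      intro _ x hx
      have : x = t 0 := le_antisymm hx.2 hx.1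
      subst this
      rw [hH]
      exact intervalIntegral.integral_same
    | succ i ih =>
      intro hi x hx
      rcases le_or_gt x (t i) with hxi | hxi
      · exact ih (by omega) x ⟨hx.1, hxi⟩
      · have := hQe i (by omega) x ⟨hxi.le, hx.2⟩
        rw [this, hQ0 i (by omega), Polynomial.eval_zero]
  have hH0 : ∀ x, H x = 0 := by
    intro x
    rcases le_or_gt x (t 0) with hx | hx
    · exact hHleft x hx
    · rcases le_or_gt x (t (m + 2)) with hx2 | hx2
      · exact hHmid (m + 2) le_rfl x ⟨hx.le, hx2⟩
      · exact hHright x hx2.le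
  intro x
  have hHfun : H = fun _ => (0:ℝ) := funext hH0
  have hd := (hHd x).deriv
  rw [hHfun] at hd
  rw [← hd, deriv_const]

lemma range_finite_of_factor {α β γ : Type*} (f : α → β) (g : α → γ)
    (hg : (Set.range g).Finite) (hfac : ∀ a b, g a = g b → f a = f b) :
    (Set.range f).Finite := by
  haveI := hg.to_subtype
  have hsub : Set.range f ⊆ Set.range (fun v : Set.range g => f (Classical.choose v.2)) := by
    rintro y ⟨a, rfl⟩
    refine ⟨⟨g a, Set.mem_range_self a⟩, ?_⟩
    exact hfac _ _ (Classical.choose_spec (Set.mem_range_self a))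
  exact (Set.finite_range _).subset hsub

/-- on a Delaunay set of finite local complexity, the translated shapes
`x ↦ B_n (x + lam n)` of the order-`s` B-splines form a finite set of compactly
supported functions. -/
theorem statement1 (Λ : Set ℝ) (lam : ℤ → ℝ) (s : ℕ) (B : ℤ → ℝ → ℝ)
    (hΛ : Delaunay Λ) (hflc : FiniteLocalComplexity Λ)
    (hmono : StrictMono lam) (hrange : Set.range lam = Λ) (hs : 2 ≤ s)
    (hB : ∀ n : ℤ, B n ∈ SplineSpace lam s ∧
      tsupport (B n) = Set.Icc (lam n) (lam (n + (s : ℤ))) ∧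
      (∫ x : ℝ, B n x) = (lam (n + (s : ℤ)) - lam n) / (s : ℝ)) :
    (Set.range fun n : ℤ => fun x : ℝ => B n (x + lam n)).Finite ∧
      ∀ n : ℤ, HasCompactSupport fun x : ℝ => B n (x + lam n) := by
  obtain ⟨⟨r, hr, hsep⟩, ⟨R, hRpos, hdense⟩⟩ := hΛ
  have hmem : ∀ k : ℤ, lam k ∈ Λ := fun k => hrange ▸ Set.mem_range_self k
  have hcs : ∀ n : ℤ, HasCompactSupport (B n) := by
    intro n
    have : IsCompact (tsupport (B n)) := by rw [(hB n).2.1]; exact isCompact_Icc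
    exact this
  have hcs' : ∀ n : ℤ, HasCompactSupport fun x : ℝ => B n (x + lam n) := fun n =>
    (hcs n).comp_homeomorph (Homeomorph.addRight (lam n))
  refine ⟨?_, hcs'⟩
  -- gap bounds
  have gapUB : ∀ k : ℤ, lam (k + 1) - lam k ≤ 2 * R := by
    intro k
    by_contra hcon
    push_neg at hcon
    obtain ⟨y, hyΛ, hyd⟩ := hdense ((lam k + lam (k + 1)) / 2)
    rw [← hrange] at hyΛ
    obtain ⟨j, rfl⟩ := hyΛ
    rw [abs_le] at hyd
    have h1 : lam k < lam j := by
      have := hyd.2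
      linarith
    have h2 : lam j < lam (k + 1) := by
      have := hyd.1
      linarith
    have hk1 : k < j := hmono.lt_iff_lt.mp h1
    have hk2 : j < k + 1 := hmono.lt_iff_lt.mp h2
    omega
  have multigap : ∀ (n : ℤ) (i : ℕ), lam (n + (i : ℤ)) - lam n ≤ 2 * R * i := by
    intro n i
    induction i with
    | zero => simp
    | succ i ih =>
      have hg := gapUB (n + (i : ℤ))
      have harg : n + ((i + 1 : ℕ) : ℤ) = (n + (i : ℤ)) + 1 := by push_cast; ring
      rw [harg]
      push_cast
      nlinarith
  set R' : ℝ := 2 * R * s + 1 with hR'def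
  have hR' : (0 : ℝ) < R' := by positivity
  set pat : ℤ → Set ℝ := fun n => ((fun x => x - lam n) '' Λ) ∩ Set.Ioo (-R') R' with hpat
  have hpatfin : (Set.range pat).Finite := by
    refine (hflc R' hR').subset ?_
    rintro S ⟨n, rfl⟩
    exact ⟨lam n, hmem n, rfl⟩
  have amem : ∀ (n : ℤ) (i : ℕ), 1 ≤ i → i ≤ s → (lam (n + (i : ℤ)) - lam n) ∈ pat n := by
    intro n i hi1 his
    have hpos : 0 < lam (n + (i : ℤ)) - lam n := by
      have : n < n + (i : ℤ) := by omega
      have := hmono this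
      linarith
    have hub : lam (n + (i : ℤ)) - lam n ≤ 2 * R * i := multigap n i
    have his : (i : ℝ) ≤ s := by exact_mod_cast his
    refine ⟨⟨lam (n + (i : ℤ)), hmem _, rfl⟩, ?_, ?_⟩
    · linarith
    · rw [hR'def]; nlinarith
  have one_sided : ∀ n m : ℤ, pat n = pat m → ∀ i : ℕ, i + 1 ≤ s →
      lam (n + (i : ℤ)) - lam n = lam (m + (i : ℤ)) - lam m →
      lam (m + ((i + 1 : ℕ) : ℤ)) - lam m ≤ lam (n + ((i + 1 : ℕ) : ℤ)) - lam n := by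
    intro n m hpm i hi hih
    have ha : (lam (n + ((i + 1 : ℕ) : ℤ)) - lam n) ∈ pat m :=
      hpm ▸ amem n (i + 1) (by omega) hi
    obtain ⟨⟨y, hyΛ, hy⟩, _⟩ := ha
    rw [← hrange] at hyΛ
    obtain ⟨j, rfl⟩ := hyΛ
    simp only at hy
    have hstep : lam (n + (i : ℤ)) < lam (n + ((i + 1 : ℕ) : ℤ)) := by
      apply hmono
      push_cast
      omega
    have h1 : lam (m + (i : ℤ)) < lam j := by linarith
    have hj : m + (i : ℤ) < j := hmono.lt_iff_lt.mp h1
    have hj' : m + ((i + 1 : ℕ) : ℤ) ≤ j := by push_cast; omega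
    have := hmono.le_iff_le.mpr hj'
    linarith
  have gap_eq : ∀ n m : ℤ, pat n = pat m → ∀ i : ℕ, i ≤ s →
      lam (n + (i : ℤ)) - lam n = lam (m + (i : ℤ)) - lam m := by
    intro n m hpm i
    induction i with
    | zero => intro _; simp
    | succ i ih =>
      intro hi
      exact le_antisymm (one_sided m n hpm.symm i hi (ih (by omega)).symm)
        (one_sided n m hpm i hi (ih (by omega)))
  -- shapes depend only on the pattern
  have shape_eq : ∀ n m : ℤ, pat n = pat m →
      (fun x : ℝ => B n (x + lam n)) = fun x : ℝ => B m (x + lam m) := by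
    intro n m hpm
    have hg := gap_eq n m hpm
    obtain ⟨m', rfl⟩ : ∃ k, s = k + 2 := ⟨s - 2, by omega⟩
    set c : ℝ := lam m - lam n with hc
    obtain ⟨_, hsm1, hp1⟩ := (hB n).1
    obtain ⟨_, hsm2, hp2⟩ := (hB m).1
    have hsm1' : ContDiff ℝ (m' : ℕ) (B n) := by simpa using hsm1
    have hsm2' : ContDiff ℝ (m' : ℕ) (B m) := by simpa using hsm2
    set t : ℕ → ℝ := fun i => lam (n + (i : ℤ)) with htdef
    have ht : ∀ i < m' + 2, t i < t (i + 1) := by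
      intro i _
      apply hmono
      push_cast
      omega
    have hzn : ∀ x ∉ Set.Icc (lam n) (lam (n + ((m' + 2 : ℕ) : ℤ))), B n x = 0 := by
      intro x hx
      apply image_eq_zero_of_notMem_tsupport
      rw [(hB n).2.1]
      exact hx
    have hzm : ∀ x ∉ Set.Icc (lam m) (lam (m + ((m' + 2 : ℕ) : ℤ))), B m x = 0 := by
      intro x hx
      apply image_eq_zero_of_notMem_tsupport
      rw [(hB m).2.1]
      exact hx
    have hgs := hg (m' + 2) le_rfl
    set h : ℝ → ℝ := fun x => B n x - B m (x + c) with hhdef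
    have key : ∀ x, h x = 0 := by
      apply spline_uniqueness m' t ht h
      · exact hsm1'.sub (hsm2'.comp ((contDiff_id).add contDiff_const))
      · -- vanishing outside
        intro x hx
        have ht0 : t 0 = lam n := by rw [htdef]; simp
        have htm : t (m' + 2) = lam (n + ((m' + 2 : ℕ) : ℤ)) := rfl
        rw [ht0, htm] at hx
        have hBn : B n x = 0 := hzn x hx
        have hBm : B m (x + c) = 0 := by
          apply hzm
          intro hmem2
          apply hx
          constructor
          · have := hmem2.1; rw [hc] at this; linarith
          · have := hmem2.2; rw [hc] at this; linarith
        rw [hhdef]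
        simp [hBn, hBm]
      · -- polynomial pieces
        intro i hi
        obtain ⟨p₁, hp₁d, hp₁e⟩ := hp1 (n + (i : ℤ))
        obtain ⟨p₂, hp₂d, hp₂e⟩ := hp2 (m + (i : ℤ))
        refine ⟨p₁ - p₂.comp (Polynomial.X + Polynomial.C c), ?_, ?_⟩
        · refine le_trans (Polynomial.natDegree_sub_le _ _) ?_
          have h₁ : p₁.natDegree ≤ m' + 1 := by
            rw [Polynomial.natDegree_le_iff_degree_le]
            exact_mod_cast hp₁d
          have h₂ : (p₂.comp (Polynomial.X + Polynomial.C c)).natDegree ≤ m' + 1 := by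
            rw [Polynomial.natDegree_comp, Polynomial.natDegree_X_add_C, mul_one]
            rw [Polynomial.natDegree_le_iff_degree_le]
            exact_mod_cast hp₂d
          exact sup_le h₁ h₂
        · intro x hx
          have hgi := hg i (by omega)
          have hgi1 := hg (i + 1) (by omega)
          have harg1 : t (i + 1) = lam (n + (i : ℤ) + 1) := by
            rw [htdef]; simp only; congr 1 <;> omega
          have harg2 : lam (m + ((i + 1 : ℕ) : ℤ)) = lam (m + (i : ℤ) + 1) := by
            congr 1 <;> omega
          have harg3 : lam (n + ((i + 1 : ℕ) : ℤ)) = lam (n + (i : ℤ) + 1) := by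
            congr 1 <;> omega
          have hx2 : x + c ∈ Set.Icc (lam (m + (i : ℤ))) (lam (m + (i : ℤ) + 1)) := by
            rw [harg2, harg3] at hgi1
            constructor
            · have := hx.1
              rw [htdef] at this
              simp only at this
              rw [hc]; linarith
            · have := hx.2
              rw [harg1] at this
              rw [hc]; linarith
          have he1 : B n x = p₁.eval x := by
            apply hp₁e
            refine ⟨hx.1, ?_⟩
            rw [← harg1]; exact hx.2
          have he2 : B m (x + c) = p₂.eval (x + c) := hp₂e _ hx2
          rw [hhdef]
          simp only
          rw [he1, he2, Polynomial.eval_sub, Polynomial.eval_comp, Polynomial.eval_add,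
            Polynomial.eval_X, Polynomial.eval_C]
      · -- zero integral
        have hi1 : Integrable (B n) := hsm1'.continuous.integrable_of_hasCompactSupport (hcs n)
        have hi2 : Integrable (fun x : ℝ => B m (x + c)) :=
          (hsm2'.continuous.integrable_of_hasCompactSupport (hcs m)).comp_add_right c
        rw [hhdef]
        simp only
        rw [MeasureTheory.integral_sub hi1 hi2,
          MeasureTheory.integral_add_right_eq_self (B m) c, (hB n).2.2, (hB m).2.2, hgs]
        ring
    funext x
    have hx := key (x + lam n)
    rw [hhdef] at hx
    simp only at hx
    have : x + lam n + c = x + lam m := by rw [hc]; ring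
    rw [this] at hx
    linarith
  exact range_finite_of_factor _ pat hpatfin shape_eq
end
end

section
/- Let Λ ⊆ ℝ be a Delaunay set with finite local complexity, self-similar with factor θ > 1, enumerated as (λ_n)_{n∈ℤ}, let s ≥ 2, and let n ∈ E = { n : λ_{n+1} ∉ θΛ }. Let Ψ_n be the unique function in W̃ = { f ∈ V_0^{(s)}(Λ) : f vanishes on θΛ } with compact support contained in [λ_n, ∞), Ψ_n(λ_{n+1}) = 1, and minimal support (any f ∈ W̃ supported in supp Ψ_n is proportional to Ψ_n). Then the support of Ψ_n equals the interval [λ_n, λ_{n+N_n}], where N_n is the smallest integer N ≥ s satisfying N = s + #((λ_n, λ_{n+N}) ∩ θΛ); equivalently, N_n is the smallest N such that the open interval (λ_n, λ_{n+N}) contains exactly s − 1 points of Λ \ θΛ. -/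
open MeasureTheory Set Filter

noncomputable section

/-- The space `W̃` of splines of order `s` on `Λ` vanishing at every point of `θΛ`. -/
def WtSpace (Λ : Set ℝ) (lam : ℤ → ℝ) (θ : ℝ) (s : ℕ) : Set (ℝ → ℝ) :=
  {f | f ∈ SplineSpace lam s ∧ ∀ y ∈ Λ, f (θ * y) = 0}

/- STATEMENT 5 preliminaries: auxiliary lemmas. -/

open Polynomial

attribute [local instance] Classical.propDecidable

lemma truncpow_hasDerivAt (q : ℕ) (x : ℝ) :
    HasDerivAt (fun x : ℝ => (max x 0) ^ (q + 2))
      ((q + 2 : ℝ) * (max x 0) ^ (q + 1)) x := by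
  rcases lt_trichotomy x 0 with hx | hx | hx
  · have heq : (fun x : ℝ => (max x 0) ^ (q + 2)) =ᶠ[nhds x] fun _ => (0:ℝ) := by
      filter_upwards [Iio_mem_nhds hx] with y hy
      rw [mem_Iio] at hy
      simp [max_eq_right (le_of_lt hy)]
    rw [max_eq_right (le_of_lt hx)]
    simpa using (hasDerivAt_const x (0:ℝ)).congr_of_eventuallyEq heq
  · subst hx
    rw [hasDerivAt_iff_isLittleO]
    simp only [max_self, sub_zero, smul_zero,
      zero_pow (by omega : q + 2 ≠ 0), zero_pow (by omega : q + 1 ≠ 0), mul_zero]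
    rw [Asymptotics.isLittleO_iff]
    intro ε hε
    have hmem : Iio (min ε 1) ∩ Ioi (-(min ε 1)) ∈ nhds (0:ℝ) := by
      apply inter_mem (Iio_mem_nhds (by positivity)) (Ioi_mem_nhds (by simp; positivity))
    filter_upwards [hmem] with y hy
    obtain ⟨hy1, hy2⟩ := hy
    rw [mem_Iio] at hy1; rw [mem_Ioi] at hy2
    have hy3 : |y| ≤ min ε 1 := by rw [abs_le]; constructor <;> linarith
    have h1 : |max y 0| ≤ |y| := by
      rcases le_or_gt y 0 with h | h
      · simp [max_eq_right h, abs_nonneg]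
      · simp [max_eq_left (le_of_lt h)]
    have hnorm : ‖(max y 0) ^ (q + 2)‖ = |max y 0| ^ (q + 2) := by
      simp [abs_pow]
    rw [hnorm]
    calc |max y 0| ^ (q + 2) ≤ |y| ^ (q + 2) := pow_le_pow_left₀ (abs_nonneg _) h1 _
      _ = |y| ^ (q+1) * |y| := by ring
      _ ≤ ε * |y| := by
          apply mul_le_mul_of_nonneg_right _ (abs_nonneg _)
          calc |y| ^ (q+1) ≤ |y| ^ 1 := by
                apply pow_le_pow_of_le_one (abs_nonneg _)
                  (le_trans hy3 (min_le_right _ _)) (by omega)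
            _ = |y| := pow_one _
            _ ≤ ε := le_trans hy3 (min_le_left _ _)
      _ = ε * ‖y‖ := by rw [Real.norm_eq_abs]
  · have heq : (fun x : ℝ => (max x 0) ^ (q + 2)) =ᶠ[nhds x] fun y => y ^ (q + 2) := by
      filter_upwards [Ioi_mem_nhds hx] with y hy
      rw [mem_Ioi] at hy
      simp [max_eq_left (le_of_lt hy)]
    rw [max_eq_left (le_of_lt hx)]
    have h2 := hasDerivAt_pow (q+2) x
    have := h2.congr_of_eventuallyEq heq
    simpa using this

/-- Truncated power function `x ↦ (max x 0)^(p+1)` is `C^p`. -/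
lemma contDiff_truncpow : ∀ p : ℕ, ContDiff ℝ p (fun x : ℝ => (max x 0) ^ (p + 1)) := by
  intro p
  induction p with
  | zero =>
    rw [show ((0:ℕ) : WithTop ℕ∞) = 0 from rfl, contDiff_zero]
    simpa using ((continuous_id (X := ℝ)).max continuous_const).pow 1
  | succ q ih =>
    have hcast : ((q + 1 : ℕ) : WithTop ℕ∞) = (q : WithTop ℕ∞) + 1 := by
      push_cast; ring
    rw [hcast, contDiff_succ_iff_deriv]
    refine ⟨fun x => (truncpow_hasDerivAt q x).differentiableAt, by simp, ?_⟩
    have hder : deriv (fun x : ℝ => (max x 0) ^ (q + 2)) =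
        fun x => (q + 2 : ℝ) * (max x 0) ^ (q + 1) := by
      funext x; exact (truncpow_hasDerivAt q x).deriv
    rw [hder]
    exact contDiff_const.mul ih


variable {lam : ℤ → ℝ} {Λ : Set ℝ}

lemma nodes_partition (hmono : StrictMono lam) (hrange : Set.range lam = Λ)
    (hrd : RelativelyDense Λ) (x : ℝ) : ∃ j : ℤ, lam j ≤ x ∧ x < lam (j + 1) := by
  obtain ⟨R, hR, hdense⟩ := hrd
  have hinh : ∃ j : ℤ, lam j ≤ x := by
    obtain ⟨y, hy, hyd⟩ := hdense (x - R - 1)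
    rw [← hrange] at hy
    obtain ⟨j, rfl⟩ := hy
    exact ⟨j, by cases abs_le.mp hyd; linarith⟩
  have hbdd : ∃ b : ℤ, ∀ j : ℤ, lam j ≤ x → j ≤ b := by
    obtain ⟨y, hy, hyd⟩ := hdense (x + R + 1)
    rw [← hrange] at hy
    obtain ⟨j0, rfl⟩ := hy
    refine ⟨j0, fun j hj => ?_⟩
    have : lam j < lam j0 := by cases abs_le.mp hyd; linarith
    exact le_of_lt (hmono.lt_iff_lt.mp this)
  obtain ⟨j, hj, hmax⟩ := Int.exists_greatest_of_bdd hbdd hinh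
  refine ⟨j, hj, ?_⟩
  by_contra h
  push_neg at h
  have := hmax (j+1) h
  omega

lemma lam_lt_iff (hmono : StrictMono lam) {i j : ℤ} : lam i < lam j ↔ i < j :=
  hmono.lt_iff_lt

/-- The set of nodes in a bounded open interval between two nodes. -/
lemma nodes_in_Ioo (hmono : StrictMono lam) (hrange : Set.range lam = Λ) (a b : ℤ) :
    Set.Ioo (lam a) (lam b) ∩ Λ = lam '' (Set.Ioo a b) := by
  ext x
  constructor
  · rintro ⟨hx, hxl⟩
    rw [← hrange] at hxl
    obtain ⟨i, rfl⟩ := hxl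
    exact ⟨i, ⟨hmono.lt_iff_lt.mp hx.1, hmono.lt_iff_lt.mp hx.2⟩, rfl⟩
  · rintro ⟨i, ⟨hi1, hi2⟩, rfl⟩
    exact ⟨⟨hmono hi1, hmono hi2⟩, by rw [← hrange]; exact ⟨i, rfl⟩⟩

lemma ncard_nodes (hmono : StrictMono lam) (hrange : Set.range lam = Λ) (a b : ℤ) :
    (Set.Ioo (lam a) (lam b) ∩ Λ).ncard = (b - a - 1).toNat := by
  rw [nodes_in_Ioo hmono hrange]
  rw [Set.ncard_image_of_injective _ hmono.injective]
  rw [show (Set.Ioo a b : Set ℤ) = ↑(Finset.Ioo a b) by simp]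
  rw [Set.ncard_coe_finset]
  exact Int.card_Ioo a b

lemma nodes_Ioo_finite (hmono : StrictMono lam) (hrange : Set.range lam = Λ) (a b : ℤ) :
    (Set.Ioo (lam a) (lam b) ∩ Λ).Finite := by
  rw [nodes_in_Ioo hmono hrange]
  exact (Set.finite_Ioo a b).image _


lemma affine_abs_le (p : Polynomial ℝ) (hdeg : p.natDegree ≤ 1) {u v x : ℝ}
    (h1 : u ≤ x) (h2 : x ≤ v) : |p.eval x| ≤ max |p.eval u| |p.eval v| := by
  have hd : p.degree ≤ 1 := Polynomial.degree_le_of_natDegree_le hdeg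
  have hp := Polynomial.eq_X_add_C_of_degree_le_one hd
  have heval : ∀ y : ℝ, p.eval y = p.coeff 1 * y + p.coeff 0 := by
    intro y; conv_lhs => rw [hp]
    simp
  rw [heval, heval, heval]
  rcases le_or_gt 0 (p.coeff 1) with hc | hc
  · exact abs_le_max_abs_abs (by nlinarith) (by nlinarith)
  · rw [max_comm]
    exact abs_le_max_abs_abs (by nlinarith) (by nlinarith)

lemma deriv_zero_left {g : ℝ → ℝ} (hg : Continuous (deriv g)) {a : ℝ}
    (h0 : ∀ x ≤ a, g x = 0) : ∀ x ≤ a, deriv g x = 0 := by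
  have hIio : ∀ y < a, deriv g y = 0 := by
    intro y hy
    have : g =ᶠ[nhds y] fun _ => (0:ℝ) := by
      filter_upwards [Iio_mem_nhds hy] with z hz
      exact h0 z (le_of_lt hz)
    rw [this.deriv_eq, deriv_const]
  intro x hx
  rcases eq_or_lt_of_le hx with heq' | hlt
  · subst heq'
    have heq : Set.EqOn (deriv g) (fun _ => (0:ℝ)) (Iio x) := fun y hy => hIio y hy
    have := heq.closure hg continuous_const
    have hmem : x ∈ closure (Iio x) := by rw [closure_Iio]; exact self_mem_Iic
    exact this hmem
  · exact hIio x hlt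

lemma deriv_zero_right {g : ℝ → ℝ} (hg : Continuous (deriv g)) {b : ℝ}
    (h0 : ∀ x, b ≤ x → g x = 0) : ∀ x, b ≤ x → deriv g x = 0 := by
  have hIoi : ∀ y, b < y → deriv g y = 0 := by
    intro y hy
    have : g =ᶠ[nhds y] fun _ => (0:ℝ) := by
      filter_upwards [Ioi_mem_nhds hy] with z hz
      exact h0 z (le_of_lt hz)
    rw [this.deriv_eq, deriv_const]
  intro x hx
  rcases eq_or_lt_of_le hx with heq' | hlt
  · subst heq'
    have heq : Set.EqOn (deriv g) (fun _ => (0:ℝ)) (Ioi b) := fun y hy => hIoi y hy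
    have := heq.closure hg continuous_const
    have hmem : b ∈ closure (Ioi b) := by rw [closure_Ioi]; exact self_mem_Ici
    exact this hmem
  · exact hIoi x hlt

lemma deriv_zero_of_abs_max {g : ℝ → ℝ} {α β w : ℝ}
    (hw : w ∈ Set.Ioo α β) (hmax : ∀ x ∈ Set.Icc α β, |g x| ≤ |g w|) (hne : g w ≠ 0) :
    deriv g w = 0 := by
  have hnhds : Set.Icc α β ∈ nhds w := Icc_mem_nhds hw.1 hw.2
  rcases lt_or_gt_of_ne hne with hneg | hpos
  · have : IsLocalMin g w := by
      filter_upwards [hnhds] with x hx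
      have := hmax x hx
      rw [abs_of_neg hneg] at this
      rcases abs_cases (g x) with ⟨h, _⟩ | ⟨h, _⟩ <;> linarith
    exact this.deriv_eq_zero
  · have : IsLocalMax g w := by
      filter_upwards [hnhds] with x hx
      have := hmax x hx
      rw [abs_of_pos hpos] at this
      rcases abs_cases (g x) with ⟨h, _⟩ | ⟨h, _⟩ <;> linarith
    exact this.deriv_eq_zero

lemma spline_deriv_on_Icc {g : ℝ → ℝ}
    (hcont : Continuous (deriv g)) {u v : ℝ} (huv : u < v) {p : Polynomial ℝ}
    (heq : ∀ x ∈ Set.Icc u v, g x = p.eval x) :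
    ∀ x ∈ Set.Icc u v, deriv g x = p.derivative.eval x := by
  have hIoo : Set.EqOn (deriv g) (fun x => p.derivative.eval x) (Set.Ioo u v) := by
    intro y hy
    have hloc : g =ᶠ[nhds y] fun x => p.eval x := by
      filter_upwards [Ioo_mem_nhds hy.1 hy.2] with z hz
      exact heq z (Set.mem_Icc.mpr ⟨le_of_lt hz.1, le_of_lt hz.2⟩)
    rw [hloc.deriv_eq]
    exact Polynomial.deriv (p := p) (x := y)
  have hcls := hIoo.closure hcont (Polynomial.continuous p.derivative)
  intro x hx
  have hcl : Set.Icc u v ⊆ closure (Set.Ioo u v) := by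
    rw [closure_Ioo (ne_of_lt huv)]
  exact hcls (hcl hx)

variable {lam : ℤ → ℝ}

lemma spline_zero_count (hmono : StrictMono lam)
    (hpart : ∀ x : ℝ, ∃ j : ℤ, lam j ≤ x ∧ x < lam (j + 1)) :
    ∀ (σ' : ℕ) (g : ℝ → ℝ) (a b : ℝ) (K : ℕ) (c : ℕ → ℝ),
    (∀ p q : ℕ, p < q → q ≤ K + 1 → c p < c q) →
    c 0 = a → c (K + 1) = b →
    (∀ i ≤ K + 1, g (c i) = 0) →
    (∀ i ≤ K, ∃ w ∈ Set.Ioo (c i) (c (i + 1)), g w ≠ 0) →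
    ContDiff ℝ σ' g →
    (∀ x : ℝ, x ≤ a ∨ b ≤ x → g x = 0) →
    (∀ j : ℤ, ∃ p : Polynomial ℝ, p.natDegree ≤ σ' + 1 ∧
      ∀ x ∈ Set.Icc (lam j) (lam (j + 1)), g x = p.eval x) →
    ∃ e : Fin (K + σ' + 1) → ℝ, StrictMono e ∧
      ∀ i, e i ∈ Set.Ioo a b ∩ Set.range lam := by
  intro σ'
  induction σ' with
  | zero =>
    intro g a b K c hchain hc0 hcK hzero hsep hsm hvan hpoly
    have hcmono : ∀ p q : ℕ, p ≤ q → q ≤ K + 1 → c p ≤ c q := by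
      intro p q hpq hq
      rcases eq_or_lt_of_le hpq with rfl | h
      · exact le_refl _
      · exact le_of_lt (hchain p q h hq)
    have key : ∀ i : Fin (K + 1), ∃ x, x ∈ Set.Ioo (c i.val) (c (i.val+1)) ∧
        x ∈ Set.range lam := by
      rintro ⟨i, hiK⟩
      have hi : i ≤ K := by omega
      simp only
      obtain ⟨w0, hw0, hgw0⟩ := hsep i hi
      have hci : c i < c (i+1) := hchain i (i+1) (by omega) (by omega)
      obtain ⟨w, hwmem, hwmax⟩ := (isCompact_Icc (a := c i) (b := c (i+1))).exists_isMaxOn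
        (Set.nonempty_Icc.mpr (le_of_lt hci)) hsm.continuous.abs.continuousOn
      have hmax : ∀ x ∈ Set.Icc (c i) (c (i+1)), |g x| ≤ |g w| := fun x hx => hwmax hx
      have hgwpos : 0 < |g w| := lt_of_lt_of_le (abs_pos.mpr hgw0)
        (hmax w0 ⟨le_of_lt hw0.1, le_of_lt hw0.2⟩)
      have hwne : g w ≠ 0 := fun h => by rw [h] at hgwpos; simp at hgwpos
      have hwlt : w ∈ Set.Ioo (c i) (c (i+1)) := by
        rcases hwmem with ⟨h1, h2⟩
        rcases eq_or_lt_of_le h1 with heq | h1'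
        · rw [← heq] at hwne; exact absurd (hzero i (by omega)) hwne
        rcases eq_or_lt_of_le h2 with heq | h2'
        · rw [heq] at hwne; exact absurd (hzero (i+1) (by omega)) hwne
        exact ⟨h1', h2'⟩
      obtain ⟨j, hj1, hj2⟩ := hpart w
      obtain ⟨p, hpdeg, hpeq⟩ := hpoly j
      set u := max (lam j) (c i) with hu
      set v := min (lam (j+1)) (c (i+1)) with hv
      have huw : u ≤ w := max_le hj1 (le_of_lt hwlt.1)
      have hwv : w ≤ v := le_min (le_of_lt hj2) (le_of_lt hwlt.2)
      have hwI : w ∈ Set.Icc (lam j) (lam (j+1)) := ⟨hj1, le_of_lt hj2⟩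
      have huI : u ∈ Set.Icc (lam j) (lam (j+1)) :=
        ⟨le_max_left _ _, le_trans (le_trans huw hwv) (min_le_left _ _)⟩
      have hvI : v ∈ Set.Icc (lam j) (lam (j+1)) :=
        ⟨le_trans huI.1 (le_trans huw hwv), min_le_left _ _⟩
      have habs : |g w| ≤ max |g u| |g v| := by
        rw [hpeq w hwI, hpeq u huI, hpeq v hvI]
        exact affine_abs_le p (by omega) huw hwv
      have huc : u ∈ Set.Icc (c i) (c (i+1)) := ⟨le_max_right _ _, le_trans huw (le_of_lt hwlt.2)⟩
      have hvc : v ∈ Set.Icc (c i) (c (i+1)) := ⟨le_trans (le_of_lt hwlt.1) hwv, min_le_right _ _⟩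
      rcases le_max_iff.mp habs with hcase | hcase
      · -- e = u, and u must equal lam j
        have hune : g u ≠ 0 := by
          intro h; rw [h] at hcase; simp at hcase; exact hwne hcase
        have hult : u ∈ Set.Ioo (c i) (c (i+1)) := by
          rcases eq_or_lt_of_le huc.1 with heq | h1'
          · rw [← heq] at hune; exact absurd (hzero i (by omega)) hune
          · exact ⟨h1', lt_of_le_of_lt huw hwlt.2⟩
        have huj : u = lam j := by
          rcases max_choice (lam j) (c i) with h | h
          · exact h
          · rw [hu, h] at hune; exact absurd (hzero i (by omega)) hune
        exact ⟨u, hult, by rw [huj]; exact ⟨j, rfl⟩⟩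
      · -- e = v, and v must equal lam (j+1)
        have hvne : g v ≠ 0 := by
          intro h; rw [h] at hcase; simp at hcase; exact hwne hcase
        have hvlt : v ∈ Set.Ioo (c i) (c (i+1)) := by
          rcases eq_or_lt_of_le hvc.2 with heq | h2'
          · rw [heq] at hvne; exact absurd (hzero (i+1) (by omega)) hvne
          · exact ⟨lt_of_lt_of_le hwlt.1 hwv, h2'⟩
        have hvj : v = lam (j+1) := by
          rcases min_choice (lam (j+1)) (c (i+1)) with h | h
          · exact h
          · rw [hv, h] at hvne; exact absurd (hzero (i+1) (by omega)) hvne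
        exact ⟨v, hvlt, by rw [hvj]; exact ⟨j+1, rfl⟩⟩
    choose e he1 he2 using key
    refine ⟨e, ?_, ?_⟩
    · intro i i' hii'
      have h1 : e i < c (i.val + 1) := (he1 i).2
      have h2 : c i'.val < e i' := (he1 i').1
      have h3 : c (i.val + 1) ≤ c i'.val := hcmono _ _ (by omega) (by omega)
      linarith
    · intro i
      refine ⟨⟨?_, ?_⟩, he2 i⟩
      · calc a = c 0 := hc0.symm
          _ ≤ c i.val := hcmono 0 i.val (by omega) (by omega)
          _ < e i := (he1 i).1
      · calc e i < c (i.val + 1) := (he1 i).2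
          _ ≤ c (K+1) := hcmono _ _ (by omega) (by omega)
          _ = b := hcK
  | succ σ ih =>
    intro g a b K c hchain hc0 hcK hzero hsep hsm hvan hpoly
    have hcast : ((σ + 1 : ℕ) : WithTop ℕ∞) = (σ : WithTop ℕ∞) + 1 := by push_cast; ring
    have hsm' : ContDiff ℝ ((σ : WithTop ℕ∞) + 1) g := by rw [← hcast]; exact hsm
    have h1le : (1 : WithTop ℕ∞) ≤ ((σ + 1 : ℕ) : WithTop ℕ∞) := by
      rw [hcast]; exact le_add_self
    have hdiff : Differentiable ℝ g := hsm.differentiable (by simp)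
    have hdc : Continuous (deriv g) := hsm.continuous_deriv h1le
    have hgsm : ContDiff ℝ (σ : WithTop ℕ∞) (deriv g) := (contDiff_succ_iff_deriv.mp hsm').2.2
    have hab : a < b := by rw [← hc0, ← hcK]; exact hchain 0 (K+1) (by omega) (by omega)
    have hcmono : ∀ p q : ℕ, p ≤ q → q ≤ K + 1 → c p ≤ c q := by
      intro p q hpq hq
      rcases eq_or_lt_of_le hpq with rfl | h
      · exact le_refl _
      · exact le_of_lt (hchain p q h hq)
    -- choose max points in each gap
    have hKey : ∀ i : ℕ, ∃ w, i ≤ K → w ∈ Set.Ioo (c i) (c (i+1)) ∧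
        (∀ x ∈ Set.Icc (c i) (c (i+1)), |g x| ≤ |g w|) ∧ g w ≠ 0 := by
      intro i
      by_cases hi : i ≤ K
      · obtain ⟨w0, hw0, hgw0⟩ := hsep i hi
        have hci : c i < c (i+1) := hchain i (i+1) (by omega) (by omega)
        obtain ⟨w, hwmem, hwmax⟩ := (isCompact_Icc (a := c i) (b := c (i+1))).exists_isMaxOn
          (Set.nonempty_Icc.mpr (le_of_lt hci)) hsm.continuous.abs.continuousOn
        have hmax : ∀ x ∈ Set.Icc (c i) (c (i+1)), |g x| ≤ |g w| := fun x hx => hwmax hx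
        have hgwpos : 0 < |g w| := lt_of_lt_of_le (abs_pos.mpr hgw0)
          (hmax w0 ⟨le_of_lt hw0.1, le_of_lt hw0.2⟩)
        have hwne : g w ≠ 0 := fun h => by rw [h] at hgwpos; simp at hgwpos
        have hwlt : w ∈ Set.Ioo (c i) (c (i+1)) := by
          rcases hwmem with ⟨h1, h2⟩
          rcases eq_or_lt_of_le h1 with heq | h1'
          · rw [← heq] at hwne; exact absurd (hzero i (by omega)) hwne
          rcases eq_or_lt_of_le h2 with heq | h2'
          · rw [heq] at hwne; exact absurd (hzero (i+1) (by omega)) hwne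
          exact ⟨h1', h2'⟩
        exact ⟨w, fun _ => ⟨hwlt, hmax, hwne⟩⟩
      · exact ⟨0, fun h => absurd h hi⟩
    choose w hw using hKey
    -- the new chain
    set c' : ℕ → ℝ := fun i => if i = 0 then a else if i ≤ K + 1 then w (i - 1) else b with hc'
    have hc'0 : c' 0 = a := by simp [hc']
    have hc'mid : ∀ i : ℕ, 1 ≤ i → i ≤ K + 1 → c' i = w (i - 1) := by
      intro i h1 h2
      simp only [hc']
      rw [if_neg (by omega), if_pos h2]
    have hc'end : c' (K + 2) = b := by
      simp only [hc']
      rw [if_neg (by omega), if_neg (by omega)]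
    have hwmem : ∀ i ≤ K, w i ∈ Set.Ioo (c i) (c (i+1)) := fun i hi => (hw i hi).1
    have hchain' : ∀ p q : ℕ, p < q → q ≤ (K + 1) + 1 → c' p < c' q := by
      intro p q hpq hq
      rcases Nat.eq_zero_or_pos p with rfl | hp1
      · rw [hc'0]
        rcases eq_or_lt_of_le hq with rfl | hq'
        · rw [hc'end]; exact hab
        · rw [hc'mid q (by omega) (by omega)]
          have := (hwmem (q-1) (by omega)).1
          calc a = c 0 := hc0.symm
            _ ≤ c (q-1) := hcmono 0 (q-1) (by omega) (by omega)
            _ < w (q-1) := this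
      · rw [hc'mid p (by omega) (by omega)]
        rcases eq_or_lt_of_le hq with rfl | hq'
        · rw [hc'end, ← hcK]
          calc w (p-1) < c p := by
                have := (hwmem (p-1) (by omega)).2
                rwa [Nat.sub_add_cancel hp1] at this
            _ ≤ c (K+1) := hcmono p (K+1) (by omega) (by omega)
        · rw [hc'mid q (by omega) (by omega)]
          calc w (p-1) < c p := by
                have := (hwmem (p-1) (by omega)).2
                rwa [Nat.sub_add_cancel hp1] at this
            _ ≤ c (q-1) := hcmono p (q-1) (by omega) (by omega)
            _ < w (q-1) := (hwmem (q-1) (by omega)).1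
    have hzero' : ∀ i ≤ (K + 1) + 1, deriv g (c' i) = 0 := by
      intro i hi
      rcases Nat.eq_zero_or_pos i with rfl | hp1
      · rw [hc'0]
        exact deriv_zero_left hdc (fun x hx => hvan x (Or.inl hx)) a (le_refl a)
      rcases eq_or_lt_of_le hi with rfl | hi'
      · rw [hc'end]
        exact deriv_zero_right hdc (fun x hx => hvan x (Or.inr hx)) b (le_refl b)
      · rw [hc'mid i (by omega) (by omega)]
        obtain ⟨hmem, hmax, hne⟩ := hw (i-1) (by omega)
        exact deriv_zero_of_abs_max hmem hmax hne
    have hsep' : ∀ i ≤ K + 1, ∃ ξ ∈ Set.Ioo (c' i) (c' (i + 1)), deriv g ξ ≠ 0 := by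
      intro i hi
      have hmvt : ∀ α β : ℝ, α < β → g α ≠ g β →
          ∃ ξ ∈ Set.Ioo α β, deriv g ξ ≠ 0 := by
        intro α β hαβ hne
        obtain ⟨ξ, hξ, hslope⟩ := exists_hasDerivAt_eq_slope g (deriv g) hαβ
          hsm.continuous.continuousOn (fun x _ => (hdiff x).hasDerivAt)
        refine ⟨ξ, hξ, ?_⟩
        rw [hslope]
        intro h
        rw [_root_.div_eq_zero_iff] at h
        rcases h with h | h
        · exact hne (sub_eq_zero.mp h).symm
        · linarith
      rcases Nat.eq_zero_or_pos i with rfl | hp1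
      · -- gap (a, w 0)
        obtain ⟨hmem, _, hne⟩ := hw 0 (by omega)
        have h0 : c 0 = a := hc0
        have haw : a < w 0 := by rw [← h0]; exact hmem.1
        obtain ⟨ξ, hξ, hdξ⟩ := hmvt a (w 0) haw (by
          rw [hvan a (Or.inl (le_refl a))]; exact fun h => hne h.symm)
        refine ⟨ξ, ?_, hdξ⟩
        rw [hc'0, hc'mid 1 (by omega) (by omega)]
        simpa using hξ
      rcases eq_or_lt_of_le hi with rfl | hi'
      · -- gap (w K, b)
        obtain ⟨hmem, _, hne⟩ := hw K (by omega)
        have hwb : w K < b := by rw [← hcK]; exact hmem.2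
        obtain ⟨ξ, hξ, hdξ⟩ := hmvt (w K) b hwb (by
          rw [hvan b (Or.inr (le_refl b))]; exact hne)
        refine ⟨ξ, ?_, hdξ⟩
        rw [hc'mid (K+1) (by omega) (by omega), hc'end]
        simpa using hξ
      · -- gap (w (i-1), w i), use [w (i-1), c i]
        obtain ⟨hmem1, _, hne1⟩ := hw (i-1) (by omega)
        obtain ⟨hmem2, _, _⟩ := hw i (by omega)
        have hwc : w (i-1) < c i := by
          have := hmem1.2
          rwa [Nat.sub_add_cancel hp1] at this
        obtain ⟨ξ, hξ, hdξ⟩ := hmvt (w (i-1)) (c i) hwc (by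
          rw [hzero i (by omega)]; exact hne1)
        refine ⟨ξ, ?_, hdξ⟩
        rw [hc'mid i (by omega) (by omega), hc'mid (i+1) (by omega) (by omega)]
        constructor
        · exact hξ.1
        · simp only [Nat.add_sub_cancel]
          exact lt_trans hξ.2 hmem2.1
    have hvan' : ∀ x : ℝ, x ≤ a ∨ b ≤ x → deriv g x = 0 := by
      intro x hx
      rcases hx with hx | hx
      · exact deriv_zero_left hdc (fun y hy => hvan y (Or.inl hy)) x hx
      · exact deriv_zero_right hdc (fun y hy => hvan y (Or.inr hy)) x hx
    have hpoly' : ∀ j : ℤ, ∃ p : Polynomial ℝ, p.natDegree ≤ σ + 1 ∧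
        ∀ x ∈ Set.Icc (lam j) (lam (j + 1)), deriv g x = p.eval x := by
      intro j
      obtain ⟨p, hpdeg, hpeq⟩ := hpoly j
      refine ⟨p.derivative, ?_, ?_⟩
      · have := Polynomial.natDegree_derivative_le p
        omega
      · exact spline_deriv_on_Icc hdc (hmono (by omega)) hpeq
    have hres := ih (deriv g) a b (K + 1) c' hchain' hc'0 hc'end hzero' hsep' hgsm hvan' hpoly'
    have hcount : K + (σ + 1) + 1 = (K + 1) + σ + 1 := by omega
    rw [hcount]
    exact hres


lemma poly_zero_of_vanish {p : Polynomial ℝ} {u v : ℝ} (huv : u < v)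
    (h : ∀ x ∈ Set.Ioo u v, p.eval x = 0) : p = 0 := by
  apply Polynomial.eq_zero_of_infinite_isRoot
  apply Set.Infinite.mono (s := Set.Ioo u v)
  · intro x hx; exact h x hx
  · exact Set.Ioo_infinite huv

lemma cont_zero_at_closure {Ψ : ℝ → ℝ} (hcont : Continuous Ψ) {s : Set ℝ}
    (h : ∀ x ∈ s, Ψ x = 0) {y : ℝ} (hy : y ∈ closure s) : Ψ y = 0 := by
  have heq : Set.EqOn Ψ (fun _ => (0:ℝ)) s := fun x hx => h x hx
  exact heq.closure hcont continuous_const hy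

lemma tsupport_sub_Iic {Ψ : ℝ → ℝ} {t : ℝ} (h : ∀ x, t ≤ x → Ψ x = 0) :
    tsupport Ψ ⊆ Set.Iic t := by
  have h1 : Function.support Ψ ⊆ Set.Iio t := by
    intro x hx
    by_contra hc
    exact hx (h x (not_lt.mp hc))
  calc tsupport Ψ ⊆ closure (Set.Iio t) := closure_mono h1
    _ = Set.Iic t := closure_Iio t

lemma tsupport_sub_Ici {Ψ : ℝ → ℝ} {t : ℝ} (h : ∀ x, x ≤ t → Ψ x = 0) :
    tsupport Ψ ⊆ Set.Ici t := by
  have h1 : Function.support Ψ ⊆ Set.Ioi t := by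
    intro x hx
    by_contra hc
    exact hx (h x (not_lt.mp hc))
  calc tsupport Ψ ⊆ closure (Set.Ioi t) := closure_mono h1
    _ = Set.Ici t := closure_Ioi t

/-- Endpoint structure of the support of a compactly supported spline. -/
lemma support_endpoints {lam : ℤ → ℝ} {Ψ : ℝ → ℝ} {n : ℤ}
    (hmono : StrictMono lam)
    (hpart : ∀ x : ℝ, ∃ j : ℤ, lam j ≤ x ∧ x < lam (j + 1))
    (hcont : Continuous Ψ)
    (hpoly : ∀ j : ℤ, ∃ p : Polynomial ℝ, ∀ x ∈ Set.Icc (lam j) (lam (j + 1)), Ψ x = p.eval x)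
    (hcs : HasCompactSupport Ψ) (hsupp : tsupport Ψ ⊆ Set.Ici (lam n))
    (hval : Ψ (lam (n + 1)) = 1) :
    ∃ m : ℤ, n + 1 ≤ m ∧ lam n ∈ tsupport Ψ ∧ lam m ∈ tsupport Ψ ∧
      tsupport Ψ ⊆ Set.Icc (lam n) (lam m) ∧
      (∀ x : ℝ, x ≤ lam n ∨ lam m ≤ x → Ψ x = 0) := by
  set S := tsupport Ψ with hS
  have hSclosed : IsClosed S := isClosed_tsupport Ψ
  have hmem1 : lam (n+1) ∈ S := subset_tsupport Ψ (by simp [hval])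
  have hSne : S.Nonempty := ⟨_, hmem1⟩
  have hcomp : IsCompact S := hcs
  have hzero_off : ∀ x, x ∉ S → Ψ x = 0 := fun x hx => image_eq_zero_of_notMem_tsupport hx
  -- sup of support is a node
  set B := sSup S with hB
  have hBS : B ∈ S := hcomp.sSup_mem hSne
  have hSB : ∀ x ∈ S, x ≤ B := fun x hx => le_csSup hcomp.bddAbove hx
  obtain ⟨m, hm1, hm2⟩ := hpart B
  have hzero_IciB : ∀ x, lam m ≤ x → Ψ x = 0 := by
    obtain ⟨p, hp⟩ := hpoly m
    have hpz : p = 0 := by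
      apply poly_zero_of_vanish hm2
      intro x hx
      rw [← hp x ⟨le_trans hm1 (le_of_lt hx.1), le_of_lt hx.2⟩]
      apply hzero_off
      intro hxS
      exact absurd (hSB x hxS) (not_le.mpr hx.1)
    intro x hx
    rcases le_or_gt x (lam (m+1)) with h | h
    · rw [hp x ⟨hx, h⟩, hpz]; simp
    · apply hzero_off
      intro hxS
      have := hSB x hxS
      linarith [lt_of_le_of_lt hm1 hm2]
  have hBm : B = lam m :=
    le_antisymm (tsupport_sub_Iic hzero_IciB hBS) hm1
  -- inf of support is the node `lam n`
  set A := sInf S with hA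
  have hAS : A ∈ S := hcomp.sInf_mem hSne
  have hSA : ∀ x ∈ S, A ≤ x := fun x hx => csInf_le hcomp.bddBelow hx
  have hAn : lam n ≤ A := hsupp hAS
  have hzero_IioA : ∀ x, x < A → Ψ x = 0 := by
    intro x hx
    apply hzero_off
    intro hxS
    exact absurd (hSA x hxS) (not_le.mpr hx)
  obtain ⟨j, hj1, hj2⟩ := hpart A
  have hAj : A = lam j := by
    rcases eq_or_lt_of_le hj1 with heq | hlt
    · exact heq.symm
    · exfalso
      obtain ⟨p, hp⟩ := hpoly j
      have hpz : p = 0 := by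
        apply poly_zero_of_vanish hlt
        intro x hx
        rw [← hp x ⟨le_of_lt hx.1, le_trans (le_of_lt hx.2) (le_of_lt hj2)⟩]
        exact hzero_IioA x hx.2
      have hzero_Iic : ∀ x, x ≤ lam (j+1) → Ψ x = 0 := by
        intro x hx
        rcases le_or_gt (lam j) x with h | h
        · rw [hp x ⟨h, hx⟩, hpz]; simp
        · exact hzero_IioA x (lt_of_lt_of_le h (le_of_lt hlt))
      have hsub : S ⊆ Set.Ici (lam (j+1)) := tsupport_sub_Ici hzero_Iic
      have := hsub hAS
      simp only [Set.mem_Ici] at this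
      linarith
  -- now A is a node ≥ lam n and < lam (n+1)  (else Ψ (lam (n+1)) = 0)
  have hAltn1 : A < lam (n+1) := by
    rcases lt_or_ge A (lam (n+1)) with h | h
    · exact h
    · exfalso
      have hz : Ψ (lam (n+1)) = 0 := by
        rcases eq_or_lt_of_le h with heq | hlt
        · rw [← hAj] at *
          apply cont_zero_at_closure hcont (s := Set.Iio A) (fun x hx => hzero_IioA x hx)
          rw [closure_Iio, heq]
          exact self_mem_Iic
        · exact hzero_IioA _ hlt
      rw [hval] at hz
      exact one_ne_zero hz
  have hjn : j = n := by
    have h1 : n ≤ j := by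
      have := hAn
      rw [hAj] at this
      exact hmono.le_iff_le.mp this
    have h2 : j < n + 1 := by
      rw [hAj] at hAltn1
      exact hmono.lt_iff_lt.mp hAltn1
    omega
  have hAeq : A = lam n := by rw [hAj, hjn]
  have hzero_out : ∀ x : ℝ, x ≤ lam n ∨ lam m ≤ x → Ψ x = 0 := by
    intro x hx
    rcases hx with hx | hx
    · rcases eq_or_lt_of_le hx with heq | hlt
      · subst heq
        apply cont_zero_at_closure hcont (s := Set.Iio A) (fun y hy => hzero_IioA y hy)
        rw [closure_Iio, hAeq]
        exact self_mem_Iic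
      · exact hzero_IioA x (by rw [hAeq]; exact hlt)
    · exact hzero_IciB x hx
  refine ⟨m, ?_, by rw [← hAeq]; exact hAS, by rw [← hBm]; exact hBS, ?_, hzero_out⟩
  · have : lam (n+1) ≤ B := hSB _ hmem1
    rw [hBm] at this
    have := hmono.le_iff_le.mp this
    omega
  · intro x hx
    exact ⟨by rw [← hAeq]; exact hSA x hx, by rw [← hBm]; exact hSB x hx⟩


lemma iteratedDeriv_congr_of_open {f h : ℝ → ℝ} {U : Set ℝ} (hU : IsOpen U)
    (heq : ∀ x ∈ U, f x = h x) :
    ∀ i : ℕ, ∀ x ∈ U, iteratedDeriv i f x = iteratedDeriv i h x := by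
  intro i
  induction i with
  | zero => simpa using heq
  | succ i ih =>
    intro x hx
    rw [iteratedDeriv_succ, iteratedDeriv_succ]
    apply Filter.EventuallyEq.deriv_eq
    filter_upwards [hU.mem_nhds hx] with y hy
    exact ih y hy

lemma iteratedDeriv_poly (p : Polynomial ℝ) :
    ∀ i : ℕ, iteratedDeriv i (fun x => p.eval x) = fun x => (derivative^[i] p).eval x := by
  intro i
  induction i generalizing p with
  | zero => simp
  | succ i ih =>
    rw [iteratedDeriv_succ']
    have : deriv (fun x => p.eval x) = fun x => p.derivative.eval x := by
      funext x; exact Polynomial.deriv (p := p) (x := x)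
    rw [this, ih]
    funext x
    rw [Function.iterate_succ_apply]

/-- A polynomial piece adjacent (on the left) to the zero region, vanishing at its left node,
must be identically zero. -/
lemma last_piece_zero {Ψ : ℝ → ℝ} {s : ℕ} (hs : 2 ≤ s) (hsm : ContDiff ℝ (s - 2 : ℕ) Ψ)
    {u v : ℝ} (huv : u < v) {q : Polynomial ℝ} (hqdeg : q.degree ≤ (s - 1 : ℕ))
    (hq : ∀ x ∈ Set.Icc u v, Ψ x = q.eval x)
    (hvanR : ∀ x : ℝ, v ≤ x → Ψ x = 0) (hu0 : Ψ u = 0) :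
    q = 0 := by
  by_contra hqne
  -- iterated derivatives of Ψ at v vanish up to order s-2
  have hderv : ∀ i : ℕ, i ≤ s - 2 → (derivative^[i] q).eval v = 0 := by
    intro i hi
    have hicont : Continuous (iteratedDeriv i Ψ) :=
      hsm.continuous_iteratedDeriv i (by exact_mod_cast hi)
    -- on the right of v, Ψ agrees with the zero polynomial
    have hright : ∀ x ∈ Set.Ioi v, iteratedDeriv i Ψ x = 0 := by
      intro x hx
      have := iteratedDeriv_congr_of_open isOpen_Ioi
        (f := Ψ) (h := fun x => (0 : Polynomial ℝ).eval x)
        (fun y hy => by simpa using hvanR y (le_of_lt hy)) i x hx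
      rw [this, iteratedDeriv_poly]
      simp [Function.iterate_fixed (Polynomial.derivative_zero) i]
    have hv0 : iteratedDeriv i Ψ v = 0 := by
      have heqOn : Set.EqOn (iteratedDeriv i Ψ) (fun _ => (0:ℝ)) (Set.Ioi v) :=
        fun x hx => hright x hx
      have := heqOn.closure hicont continuous_const
      exact this (by rw [closure_Ioi]; exact self_mem_Ici)
    -- on the left of v, Ψ agrees with q
    have hleft : ∀ x ∈ Set.Ioo u v, iteratedDeriv i Ψ x = (derivative^[i] q).eval x := by
      intro x hx
      have := iteratedDeriv_congr_of_open isOpen_Ioo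
        (f := Ψ) (h := fun x => q.eval x)
        (fun y hy => hq y ⟨le_of_lt hy.1, le_of_lt hy.2⟩) i x hx
      rw [this, iteratedDeriv_poly]
    have heqv : iteratedDeriv i Ψ v = (derivative^[i] q).eval v := by
      have heqOn : Set.EqOn (iteratedDeriv i Ψ)
          (fun x => (derivative^[i] q).eval x) (Set.Ioo u v) := fun x hx => hleft x hx
      have := heqOn.closure hicont (Polynomial.continuous _)
      exact this (by rw [closure_Ioo (ne_of_lt huv)]; exact ⟨le_of_lt huv, le_refl v⟩)
    rw [← heqv, hv0]
  -- hence v is a root of multiplicity ≥ s-1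
  have hmult : s - 2 < q.rootMultiplicity v := by
    apply lt_rootMultiplicity_of_isRoot_iterate_derivative_of_mem_nonZeroDivisors hqne
      (fun i hi => hderv i hi)
    exact mem_nonZeroDivisors_of_ne_zero (by
      exact_mod_cast Nat.factorial_ne_zero (s-2))
  have hdvd : (X - C v) ^ (s - 1) ∣ q := by
    calc (X - C v) ^ (s - 1) ∣ (X - C v) ^ (q.rootMultiplicity v) :=
        pow_dvd_pow _ (by omega)
      _ ∣ q := q.pow_rootMultiplicity_dvd v
  obtain ⟨h, hh⟩ := hdvd
  have hhne : h ≠ 0 := by rintro rfl; rw [mul_zero] at hh; exact hqne hh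
  have hpowne : (X - C v) ^ (s - 1) ≠ 0 := pow_ne_zero _ (X_sub_C_ne_zero v)
  have hnatdeg : q.natDegree ≤ s - 1 := Polynomial.natDegree_le_iff_degree_le.mpr hqdeg
  have hdeg : h.natDegree = 0 := by
    have := Polynomial.natDegree_mul hpowne hhne
    rw [← hh] at this
    rw [Polynomial.natDegree_pow, Polynomial.natDegree_X_sub_C] at this
    omega
  obtain ⟨a, rfl⟩ := Polynomial.natDegree_eq_zero.mp hdeg
  -- evaluate at u
  have hqu : q.eval u = 0 := by rw [← hq u ⟨le_refl u, le_of_lt huv⟩]; exact hu0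
  rw [hh] at hqu
  simp only [Polynomial.eval_mul, Polynomial.eval_pow, Polynomial.eval_sub,
    Polynomial.eval_X, Polynomial.eval_C] at hqu
  have huvne : (u - v) ^ (s - 1) ≠ 0 := pow_ne_zero _ (by linarith [huv] ; )
  rcases mul_eq_zero.mp hqu with h1 | h1
  · exact huvne h1
  · rw [hh, h1] at hqne
    simp at hqne


/-- A linear map from a bigger finite-dimensional space has nontrivial kernel. -/
lemma exists_nonzero_kernel {N : ℕ} {ι : Type} [Fintype ι]
    (φ : (Fin N → ℝ) →ₗ[ℝ] (ι → ℝ)) (h : Fintype.card ι < N) :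
    ∃ v : Fin N → ℝ, v ≠ 0 ∧ φ v = 0 := by
  by_contra hcon
  push_neg at hcon
  have hinj : Function.Injective φ := by
    rw [← LinearMap.ker_eq_bot]
    by_contra hker
    obtain ⟨v, hv, hvne⟩ := Submodule.exists_mem_ne_zero_of_ne_bot hker
    rw [LinearMap.mem_ker] at hv
    exact hcon v hvne hv
  have := LinearMap.finrank_le_finrank_of_injective hinj
  rw [Module.finrank_pi, Module.finrank_pi] at this
  simp at this
  omega


lemma trunc_construction
    {lam : ℤ → ℝ} {Λ : Set ℝ} {θ : ℝ} {s : ℕ} {n : ℤ} (m : ℕ)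
    (hmono : StrictMono lam) (hrange : Set.range lam = Λ)
    (hself : (fun x => θ * x) '' Λ ⊆ Λ) (hs : 2 ≤ s)
    (v : Fin (m+1) → ℝ)
    (hP : (∑ j : Fin (m+1),
      Polynomial.C (v j) * (Polynomial.X - Polynomial.C (lam (n + (j:ℤ))))^(s-1)) = 0)
    (hTheta : ∀ i : ℤ, n < i → i < n + (m:ℤ) → lam i ∈ (fun x => θ * x) '' Λ →
      (∑ j : Fin (m+1), v j * (max (lam i - lam (n + (j:ℤ))) 0)^(s-1)) = 0) :
    (fun x => ∑ j : Fin (m+1), v j * (max (x - lam (n + (j:ℤ))) 0)^(s-1)) ∈ WtSpace Λ lam θ s ∧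
    (∀ x : ℝ, x ≤ lam n ∨ lam (n + (m:ℤ)) ≤ x →
      (∑ j : Fin (m+1), v j * (max (x - lam (n + (j:ℤ))) 0)^(s-1)) = 0) := by
  set f : ℝ → ℝ := fun x => ∑ j : Fin (m+1), v j * (max (x - lam (n + (j:ℤ))) 0)^(s-1) with hf
  have hs1 : s - 1 = (s - 2) + 1 := by omega
  have hsne : s - 1 ≠ 0 := by omega
  -- smoothness
  have hsmooth : ContDiff ℝ (s - 2 : ℕ) f := by
    apply ContDiff.sum
    intro j _
    apply ContDiff.mul contDiff_const
    have hbase := contDiff_truncpow (s - 2)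
    rw [← hs1] at hbase
    exact hbase.comp (contDiff_id.sub contDiff_const)
  have hcont : Continuous f := hsmooth.continuous
  -- vanishing outside [lam n, lam (n+m)]
  have hvan : ∀ x : ℝ, x ≤ lam n ∨ lam (n + (m:ℤ)) ≤ x → f x = 0 := by
    intro x hx
    rcases hx with hx | hx
    · apply Finset.sum_eq_zero
      intro j _
      have hj : lam n ≤ lam (n + (j:ℤ)) := hmono.le_iff_le.mpr (by omega)
      have : max (x - lam (n + (j:ℤ))) 0 = 0 := max_eq_right (by linarith)
      rw [this, zero_pow hsne, mul_zero]
    · have hmax : ∀ j : Fin (m+1), max (x - lam (n + (j:ℤ))) 0 = x - lam (n + (j:ℤ)) := by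
        intro j
        apply max_eq_left
        have hj : lam (n + (j:ℤ)) ≤ lam (n + (m:ℤ)) :=
          hmono.le_iff_le.mpr (by omega)
        linarith
      have : f x = Polynomial.eval x (∑ j : Fin (m+1),
          Polynomial.C (v j) * (Polynomial.X - Polynomial.C (lam (n + (j:ℤ))))^(s-1)) := by
        rw [Polynomial.eval_finset_sum]
        apply Finset.sum_congr rfl
        intro j _
        rw [hmax j]
        simp
      rw [this, hP]
      simp
  -- compact support
  have hcs : HasCompactSupport f := by
    apply HasCompactSupport.intro (isCompact_Icc (a := lam n) (b := lam (n + (m:ℤ))))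
    intro x hx
    simp only [Set.mem_Icc, not_and_or, not_le] at hx
    rcases hx with hx | hx
    · exact hvan x (Or.inl (le_of_lt hx))
    · exact hvan x (Or.inr (le_of_lt hx))
  refine ⟨⟨⟨hcont.memLp_of_hasCompactSupport hcs, hsmooth, ?_⟩, ?_⟩, hvan⟩
  · -- piecewise polynomial
    intro i
    set F : Finset (Fin (m+1)) := Finset.univ.filter (fun j => n + (j:ℤ) ≤ i) with hF
    refine ⟨∑ j ∈ F, Polynomial.C (v j) * (Polynomial.X - Polynomial.C (lam (n + (j:ℤ))))^(s-1),
      ?_, ?_⟩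
    · apply le_trans (Polynomial.degree_sum_le _ _)
      apply Finset.sup_le
      intro j _
      apply le_trans (Polynomial.degree_mul_le _ _)
      have h1 : (Polynomial.C (v j)).degree ≤ 0 := Polynomial.degree_C_le
      have h2 : ((Polynomial.X - Polynomial.C (lam (n + (j:ℤ))))^(s-1)).degree ≤ ((s-1 : ℕ) : WithBot ℕ) := by
        rw [Polynomial.degree_pow, Polynomial.degree_X_sub_C]
        simp
      calc (Polynomial.C (v j)).degree + ((Polynomial.X - Polynomial.C (lam (n + (j:ℤ))))^(s-1)).degree
          ≤ 0 + ((s-1 : ℕ) : WithBot ℕ) := add_le_add h1 h2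
        _ = ((s-1 : ℕ) : WithBot ℕ) := zero_add _
    · intro x hx
      rw [Polynomial.eval_finset_sum]
      show (∑ j : Fin (m+1), v j * (max (x - lam (n + (j:ℤ))) 0)^(s-1)) = _
      have hsplit := Finset.sum_filter_add_sum_filter_not (Finset.univ : Finset (Fin (m+1)))
        (fun j => n + (j:ℤ) ≤ i) (fun j => v j * (max (x - lam (n + (j:ℤ))) 0)^(s-1))
      rw [← hsplit]
      have h2 : ∑ j ∈ Finset.univ.filter (fun j : Fin (m+1) => ¬(n + (j:ℤ) ≤ i)),
          v j * (max (x - lam (n + (j:ℤ))) 0)^(s-1) = 0 := by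
        apply Finset.sum_eq_zero
        intro j hj
        simp only [Finset.mem_filter] at hj
        have : lam (i+1) ≤ lam (n + (j:ℤ)) := hmono.le_iff_le.mpr (by omega)
        have hmax : max (x - lam (n + (j:ℤ))) 0 = 0 := max_eq_right (by
          have := hx.2; linarith)
        rw [hmax, zero_pow hsne, mul_zero]
      rw [h2, add_zero]
      apply Finset.sum_congr rfl
      intro j hj
      simp only [hF, Finset.mem_filter] at hj
      have : lam (n + (j:ℤ)) ≤ lam i := hmono.le_iff_le.mpr hj.2
      have hmax : max (x - lam (n + (j:ℤ))) 0 = x - lam (n + (j:ℤ)) := max_eq_left (by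
        have := hx.1; linarith)
      rw [hmax]
      simp
  · -- vanishing on θΛ
    intro y hy
    have hmem : θ * y ∈ Λ := hself ⟨y, hy, rfl⟩
    rw [← hrange] at hmem
    obtain ⟨i, hi⟩ := hmem
    rw [← hi]
    rcases le_or_gt i n with h | h
    · exact hvan _ (Or.inl (hmono.le_iff_le.mpr h))
    rcases le_or_gt (n + (m:ℤ)) i with h2 | h2
    · exact hvan _ (Or.inr (hmono.le_iff_le.mpr h2))
    · exact hTheta i h h2 (by rw [hi]; exact ⟨y, hy, rfl⟩)


lemma no_gap {Λ : Set ℝ} {lam : ℤ → ℝ} {θ : ℝ} {s : ℕ} {n mIdx : ℤ} {Ψ : ℝ → ℝ}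
    (hmem : Ψ ∈ WtSpace Λ lam θ s)
    (hmin : ∀ f ∈ WtSpace Λ lam θ s, tsupport f ⊆ tsupport Ψ →
      ∃ c : ℝ, f = fun x => c * Ψ x)
    (hcs : HasCompactSupport Ψ)
    (hmemA : lam n ∈ tsupport Ψ) (hmemB : lam mIdx ∈ tsupport Ψ)
    (hSsub : tsupport Ψ ⊆ Set.Icc (lam n) (lam mIdx)) :
    Set.Ioo (lam n) (lam mIdx) ⊆ tsupport Ψ := by
  obtain ⟨⟨hl2, hsm, hpoly⟩, hvanΘ⟩ := hmem
  have hcont : Continuous Ψ := hsm.continuous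
  set a := lam n with ha
  set b := lam mIdx with hb
  intro x hx
  by_contra hxS
  set S := tsupport Ψ with hS
  have hScl : IsClosed S := isClosed_tsupport Ψ
  -- left and right ends of the gap
  set SL := S ∩ Set.Icc a x with hSL
  set SR := S ∩ Set.Icc x b with hSR
  have hSLcomp : IsCompact SL := hcs.of_isClosed_subset (hScl.inter isClosed_Icc)
    Set.inter_subset_left
  have hSRcomp : IsCompact SR := hcs.of_isClosed_subset (hScl.inter isClosed_Icc)
    Set.inter_subset_left
  have hSLne : SL.Nonempty := ⟨a, hmemA, le_refl a, le_of_lt hx.1⟩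
  have hSRne : SR.Nonempty := ⟨b, hmemB, le_of_lt hx.2, le_refl b⟩
  set c := sSup SL with hc
  set d := sInf SR with hd
  have hcSL : c ∈ SL := hSLcomp.sSup_mem hSLne
  have hdSR : d ∈ SR := hSRcomp.sInf_mem hSRne
  have hcx : c < x := lt_of_le_of_ne hcSL.2.2 (fun h => hxS (h ▸ hcSL.1))
  have hxd : x < d := lt_of_le_of_ne hdSR.2.1 (fun h => hxS (h ▸ hdSR.1))
  have hcd : c < d := lt_trans hcx hxd
  have hgap : ∀ y, c < y → y < d → y ∉ S := by
    intro y hy1 hy2 hyS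
    have hyI : y ∈ Set.Icc a b := hSsub hyS
    rcases le_or_gt y x with h | h
    · exact absurd (le_csSup hSLcomp.bddAbove ⟨hyS, hyI.1, h⟩) (not_le.mpr hy1)
    · exact absurd (csInf_le hSRcomp.bddBelow ⟨hyS, le_of_lt h, hyI.2⟩) (not_le.mpr hy2)
  have hΨgap : ∀ y ∈ Set.Ioo c d, Ψ y = 0 := fun y hy =>
    image_eq_zero_of_notMem_tsupport (hgap y hy.1 hy.2)
  have hΨc : Ψ c = 0 := cont_zero_at_closure hcont hΨgap
    (by rw [closure_Ioo (ne_of_lt hcd)]; exact ⟨le_refl c, le_of_lt hcd⟩)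
  have hΨd : Ψ d = 0 := cont_zero_at_closure hcont hΨgap
    (by rw [closure_Ioo (ne_of_lt hcd)]; exact ⟨le_of_lt hcd, le_refl d⟩)
  -- truncated function
  set f : ℝ → ℝ := fun y => if y ≤ c then Ψ y else 0 with hf
  have hfd : ∀ y, y < d → f y = Ψ y := by
    intro y hy
    rcases le_or_gt y c with h | h
    · simp [hf, h]
    · rw [hf]; simp only [if_neg (not_le.mpr h)]
      exact (hΨgap y ⟨h, hy⟩).symm
  have hfc : ∀ y, c < y → f y = 0 := by
    intro y hy
    rw [hf]; simp only [if_neg (not_le.mpr hy)]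
  have hfsub : tsupport f ⊆ tsupport Ψ := by
    apply closure_mono
    intro y hy
    simp only [Function.mem_support, hf] at hy ⊢
    rcases le_or_gt y c with h | h
    · rw [if_pos h] at hy; exact hy
    · rw [if_neg (not_le.mpr h)] at hy; exact absurd rfl hy
  have hfcs : HasCompactSupport f := hcs.of_isClosed_subset (isClosed_tsupport f) hfsub
  have hfsm : ContDiff ℝ (s - 2 : ℕ) f := by
    rw [contDiff_iff_contDiffAt]
    intro y
    rcases lt_or_ge y d with h | h
    · apply (hsm.contDiffAt).congr_of_eventuallyEq
      filter_upwards [Iio_mem_nhds h] with z hz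
      exact hfd z hz
    · apply (contDiffAt_const (c := (0:ℝ))).congr_of_eventuallyEq
      filter_upwards [Ioi_mem_nhds (lt_of_lt_of_le hcd h)] with z hz
      exact hfc z hz
  have hfcont : Continuous f := hfsm.continuous
  have hfpoly : ∀ j : ℤ, ∃ p : Polynomial ℝ, p.degree ≤ (s - 1 : ℕ) ∧
      ∀ y ∈ Set.Icc (lam j) (lam (j + 1)), f y = p.eval y := by
    intro j
    obtain ⟨p, hpdeg, hp⟩ := hpoly j
    rcases le_or_gt (lam (j+1)) c with hco | hco
    · exact ⟨p, hpdeg, fun y hy => by rw [hfd y (lt_of_le_of_lt (le_trans hy.2 hco) hcd),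
        hp y hy]⟩
    rcases le_or_gt c (lam j) with hco2 | hco2
    · refine ⟨0, by simp, ?_⟩
      intro y hy
      simp only [Polynomial.eval_zero]
      rcases le_or_gt y c with h | h
      · have h1 : y = c := le_antisymm h (le_trans hco2 hy.1)
        rw [hf]; simp only [if_pos h]
        rw [h1]; exact hΨc
      · exact hfc y h
    · -- lam j < c < lam (j+1) : the polynomial must vanish
      have hpz : p = 0 := by
        apply poly_zero_of_vanish (u := c) (v := min d (lam (j+1)))
          (lt_min hcd hco)
        intro z hz
        rw [← hp z ⟨le_trans (le_of_lt hco2) (le_of_lt hz.1),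
          le_of_lt (lt_of_lt_of_le hz.2 (min_le_right _ _))⟩]
        exact hΨgap z ⟨hz.1, lt_of_lt_of_le hz.2 (min_le_left _ _)⟩
      refine ⟨0, by simp, ?_⟩
      intro y hy
      simp only [Polynomial.eval_zero]
      rcases le_or_gt y c with h | h
      · rw [hf]; simp only [if_pos h]
        rw [hp y hy, hpz]; simp
      · exact hfc y h
  have hfW : f ∈ WtSpace Λ lam θ s := by
    refine ⟨⟨hfcont.memLp_of_hasCompactSupport hfcs, hfsm, hfpoly⟩, ?_⟩
    intro y hy
    rcases le_or_gt (θ * y) c with h | h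
    · rw [hf]; simp only [if_pos h]; exact hvanΘ y hy
    · exact hfc _ h
  obtain ⟨cc, hcceq⟩ := hmin f hfW hfsub
  -- d is in the support: find a nonzero point to the right of c, forcing cc = 0
  have hcczero : cc = 0 := by
    have hdS : d ∈ closure (Function.support Ψ) := hdSR.1
    rw [mem_closure_iff] at hdS
    obtain ⟨w, hw1, hw2⟩ := hdS (Set.Ioo c (d + 1)) isOpen_Ioo ⟨hcd, by linarith⟩
    have : f w = cc * Ψ w := by rw [hcceq]
    rw [hfc w hw1.1] at this
    have hΨw : Ψ w ≠ 0 := hw2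
    rcases mul_eq_zero.mp this.symm with h | h
    · exact h
    · exact absurd h hΨw
  -- c is in the support: find a nonzero point to the left of d, contradiction
  have hcS : c ∈ closure (Function.support Ψ) := hcSL.1
  rw [mem_closure_iff] at hcS
  obtain ⟨w, hw1, hw2⟩ := hcS (Set.Ioo (c - 1) d) isOpen_Ioo ⟨by linarith, hcd⟩
  have hwc : w ≤ c := by
    by_contra hcon
    push_neg at hcon
    exact hw2 (hΨgap w ⟨hcon, hw1.2⟩)
  have : f w = cc * Ψ w := by rw [hcceq]
  rw [hf] at this
  simp only [if_pos hwc, hcczero, zero_mul] at this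
  exact hw2 this


lemma supp_le_bound {Λ : Set ℝ} {lam : ℤ → ℝ} {θ : ℝ} {s : ℕ} {n : ℤ} {Ψ : ℝ → ℝ}
    (hmono : StrictMono lam) (hrange : Set.range lam = Λ)
    (hself : (fun x => θ * x) '' Λ ⊆ Λ) (hs : 2 ≤ s)
    (hE : lam (n + 1) ∉ (fun x => θ * x) '' Λ)
    (hval : Ψ (lam (n + 1)) = 1)
    (hmin : ∀ f ∈ WtSpace Λ lam θ s, tsupport f ⊆ tsupport Ψ →
      ∃ c : ℝ, f = fun x => c * Ψ x)
    (N' : ℕ) (hN' : 1 ≤ N')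
    (hIccSub : Set.Icc (lam n) (lam (n + (N' : ℤ))) ⊆ tsupport Ψ) :
    N' ≤ s + ((Finset.Ioo n (n + (N' : ℤ))).filter
      (fun i => lam i ∈ (fun x => θ * x) '' Λ)).card := by
  classical
  by_contra hcon
  push_neg at hcon
  set Θ : Set ℝ := (fun x => θ * x) '' Λ with hΘ
  set T : Finset ℤ := (Finset.Ioo n (n + (N' : ℤ))).filter (fun i => lam i ∈ Θ) with hT
  set k := T.card with hk
  have hbig : s + k + 1 ≤ N' := hcon
  set T' : Finset ℤ := insert (n+1) T with hT'
  have hn1T : (n+1) ∉ T := by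
    rw [hT, Finset.mem_filter]
    rintro ⟨-, h⟩
    exact hE h
  have hT'card : T'.card = k + 1 := by
    rw [hT', Finset.card_insert_of_notMem hn1T]
  -- the constraint linear map
  set qfam : Fin (N'+1) → Polynomial ℝ :=
    fun j => (Polynomial.X - Polynomial.C (lam (n + (j:ℤ))))^(s-1) with hqfam
  set φ : (Fin (N'+1) → ℝ) →ₗ[ℝ] ((Fin s ⊕ ↥T') → ℝ) :=
    LinearMap.pi (fun x => Sum.elim
      (fun i : Fin s => (Polynomial.lcoeff ℝ i).comp
        ((Fintype.linearCombination ℝ) qfam))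
      (fun t : ↥T' => (Fintype.linearCombination ℝ)
        (fun j : Fin (N'+1) => (max (lam (t:ℤ) - lam (n + (j:ℤ))) 0)^(s-1))) x) with hφ
  have hcard : Fintype.card (Fin s ⊕ ↥T') < N' + 1 := by
    rw [Fintype.card_sum, Fintype.card_fin, Fintype.card_coe, hT'card]
    omega
  obtain ⟨v, hvne, hvker⟩ := exists_nonzero_kernel φ hcard
  have hcomp : ∀ x : Fin s ⊕ ↥T', φ v x = 0 := fun x => congrFun hvker x
  -- the polynomial constraint
  have hPsmul : (∑ j : Fin (N'+1),
      Polynomial.C (v j) * (Polynomial.X - Polynomial.C (lam (n + (j:ℤ))))^(s-1)) =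
      ∑ j : Fin (N'+1), v j • qfam j := by
    apply Finset.sum_congr rfl
    intro j _
    rw [Polynomial.smul_eq_C_mul, hqfam]
  have hP : (∑ j : Fin (N'+1),
      Polynomial.C (v j) * (Polynomial.X - Polynomial.C (lam (n + (j:ℤ))))^(s-1)) = 0 := by
    rw [hPsmul]
    set P : Polynomial ℝ := ∑ j : Fin (N'+1), v j • qfam j with hPdef
    have hdegP : P.degree ≤ ((s-1 : ℕ) : WithBot ℕ) := by
      apply le_trans (Polynomial.degree_sum_le _ _)
      apply Finset.sup_le
      intro j _
      apply le_trans (Polynomial.degree_smul_le _ _)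
      rw [hqfam]
      simp only
      rw [Polynomial.degree_pow, Polynomial.degree_X_sub_C]
      simp
    have hcoeff : ∀ i : Fin s, P.coeff i = 0 := by
      intro i
      have h1 := hcomp (Sum.inl i)
      rw [hφ] at h1
      simp only [LinearMap.pi_apply, Sum.elim_inl, LinearMap.comp_apply,
        Fintype.linearCombination_apply, Polynomial.lcoeff_apply] at h1
      rw [hPdef, Polynomial.finset_sum_coeff]
      simp only [Polynomial.coeff_smul, smul_eq_mul]
      rw [Polynomial.finset_sum_coeff] at h1
      simpa using h1
    ext i
    rcases lt_or_ge i s with h | h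
    · simpa using hcoeff ⟨i, h⟩
    · rw [Polynomial.coeff_eq_zero_of_degree_lt, Polynomial.coeff_zero]
      apply lt_of_le_of_lt hdegP
      exact_mod_cast (by omega : s - 1 < i)
  -- the point evaluations at nodes of T'
  have hevalT' : ∀ t ∈ T', (∑ j : Fin (N'+1),
      v j * (max (lam t - lam (n + (j:ℤ))) 0)^(s-1)) = 0 := by
    intro t ht
    have := hcomp (Sum.inr ⟨t, ht⟩)
    rw [hφ] at this
    simpa [Fintype.linearCombination_apply, smul_eq_mul] using this
  have hTheta : ∀ i : ℤ, n < i → i < n + (N':ℤ) → lam i ∈ Θ →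
      (∑ j : Fin (N'+1), v j * (max (lam i - lam (n + (j:ℤ))) 0)^(s-1)) = 0 := by
    intro i h1 h2 h3
    apply hevalT'
    rw [hT']
    apply Finset.mem_insert_of_mem
    rw [hT, Finset.mem_filter, Finset.mem_Ioo]
    exact ⟨⟨h1, h2⟩, h3⟩
  obtain ⟨hfW, hvanf⟩ := trunc_construction N' hmono hrange hself hs v hP hTheta
  set f : ℝ → ℝ := fun x => ∑ j : Fin (N'+1), v j * (max (x - lam (n + (j:ℤ))) 0)^(s-1) with hfdef
  -- find a point where f is nonzero
  have hsne : s - 1 ≠ 0 := by omega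
  set F0 : Finset (Fin (N'+1)) := Finset.univ.filter (fun j => v j ≠ 0) with hF0
  have hF0ne : F0.Nonempty := by
    obtain ⟨j, hj⟩ := Function.ne_iff.mp hvne
    exact ⟨j, by rw [hF0, Finset.mem_filter]; exact ⟨Finset.mem_univ j, by simpa using hj⟩⟩
  set j₀ := F0.min' hF0ne with hj₀def
  have hj₀mem : j₀ ∈ F0 := F0.min'_mem hF0ne
  have hj₀ne : v j₀ ≠ 0 := by
    have := hj₀mem; rw [hF0, Finset.mem_filter] at this; exact this.2
  have hlt_zero : ∀ j, j < j₀ → v j = 0 := by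
    intro j hj
    by_contra hc
    have : j ∈ F0 := by rw [hF0, Finset.mem_filter]; exact ⟨Finset.mem_univ j, hc⟩
    exact absurd (F0.min'_le j this) (not_le.mpr hj)
  have hx0 : ∃ x0, f x0 ≠ 0 := by
    rcases eq_or_lt_of_le (Nat.lt_succ_iff.mp j₀.isLt) with hlast | hmid
    · -- j₀ is the last index: contradiction with P = 0
      exfalso
      have hallzero : ∀ j : Fin (N'+1), j ≠ j₀ → v j = 0 := by
        intro j hj
        apply hlt_zero
        rcases lt_or_ge j j₀ with h | h
        · exact h
        · exfalso
          apply hj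
          apply le_antisymm _ h
          rw [Fin.le_def, hlast]
          exact Nat.lt_succ_iff.mp j.isLt
      have heval := congrArg (Polynomial.eval (lam (n + (N':ℤ)) + 1)) hP
      rw [Polynomial.eval_finset_sum, Polynomial.eval_zero] at heval
      rw [Finset.sum_eq_single j₀] at heval
      · simp only [Polynomial.eval_mul, Polynomial.eval_pow, Polynomial.eval_sub,
          Polynomial.eval_X, Polynomial.eval_C] at heval
        rw [show ((j₀ : ℕ) : ℤ) = (N' : ℤ) by exact_mod_cast hlast] at heval
        simp at heval
        exact hj₀ne heval
      · intro j _ hj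
        rw [hallzero j hj]
        simp
      · intro h; exact absurd (Finset.mem_univ j₀) h
    · -- j₀ < N' : evaluate at the midpoint of the next interval
      set x0 := (lam (n + (j₀:ℤ)) + lam (n + (j₀:ℤ) + 1))/2 with hx0def
      have hnode : lam (n + (j₀:ℤ)) < lam (n + (j₀:ℤ) + 1) := hmono (by omega)
      have hx0mem : lam (n + (j₀:ℤ)) < x0 ∧ x0 < lam (n + (j₀:ℤ) + 1) := by
        constructor <;> (rw [hx0def]; linarith)
      refine ⟨x0, ?_⟩
      have : f x0 = v j₀ * (x0 - lam (n + (j₀:ℤ)))^(s-1) := by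
        rw [hfdef]
        simp only
        rw [Finset.sum_eq_single j₀]
        · rw [max_eq_left (by linarith [hx0mem.1])]
        · intro j _ hj
          rcases lt_or_gt_of_ne hj with h | h
          · rw [hlt_zero j h, zero_mul]
          · have : lam (n + (j₀:ℤ) + 1) ≤ lam (n + (j:ℤ)) := by
              apply hmono.le_iff_le.mpr
              have : (j₀ : ℕ) < (j : ℕ) := h
              omega
            rw [max_eq_right (by linarith [hx0mem.2]), zero_pow hsne, mul_zero]
        · intro h; exact absurd (Finset.mem_univ j₀) h
      rw [this]
      apply mul_ne_zero hj₀ne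
      exact pow_ne_zero _ (by linarith [hx0mem.1])
  obtain ⟨x0, hx0ne⟩ := hx0
  -- apply minimality
  have hfsub : tsupport f ⊆ tsupport Ψ := by
    apply subset_trans _ hIccSub
    apply closure_minimal _ isClosed_Icc
    intro y hy
    simp only [Function.mem_support] at hy
    by_contra hyI
    simp only [Set.mem_Icc, not_and_or, not_le] at hyI
    apply hy
    rcases hyI with h | h
    · exact hvanf y (Or.inl (le_of_lt h))
    · exact hvanf y (Or.inr (le_of_lt h))
  obtain ⟨cc, hcc⟩ := hmin f hfW hfsub
  have hf1 : f (lam (n+1)) = 0 := by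
    apply hevalT'
    rw [hT']
    exact Finset.mem_insert_self _ _
  have hcc0 : cc = 0 := by
    have := congrFun hcc (lam (n+1))
    rw [hf1, hval, mul_one] at this
    exact this.symm
  have := congrFun hcc x0
  rw [hcc0, zero_mul] at this
  exact hx0ne this


lemma supp_ge_bound {lam : ℤ → ℝ} {Θ : Set ℝ} {s : ℕ} {n mIdx : ℤ} {Ψ : ℝ → ℝ}
    (hmono : StrictMono lam)
    (hpart : ∀ x : ℝ, ∃ j : ℤ, lam j ≤ x ∧ x < lam (j + 1))
    (hs : 2 ≤ s)
    (hsm : ContDiff ℝ (s - 2 : ℕ) Ψ)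
    (hpoly : ∀ j : ℤ, ∃ p : Polynomial ℝ, p.degree ≤ (s - 1 : ℕ) ∧
      ∀ x ∈ Set.Icc (lam j) (lam (j + 1)), Ψ x = p.eval x)
    (hvanΨ : ∀ x : ℝ, x ≤ lam n ∨ lam mIdx ≤ x → Ψ x = 0)
    (hsep : ∀ u v : ℝ, lam n ≤ u → v ≤ lam mIdx → u < v → ∃ w ∈ Set.Ioo u v, Ψ w ≠ 0)
    (hvannodes : ∀ i ∈ (Finset.Ioo n mIdx).filter (fun i => lam i ∈ Θ), Ψ (lam i) = 0)
    (hn : n < mIdx) :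
    ((((Finset.Ioo n mIdx).filter (fun i => lam i ∈ Θ)).card : ℤ)) + s ≤ mIdx - n := by
  set T : Finset ℤ := (Finset.Ioo n mIdx).filter (fun i => lam i ∈ Θ) with hT
  set k := T.card with hk
  set e : ℕ → ℤ := fun i => if h : i < k then ((T.orderIsoOfFin rfl ⟨i, h⟩ : ℤ)) else 0 with he
  have heT : ∀ i (h : i < k), e i ∈ T := by
    intro i h
    rw [he]
    simp only [dif_pos h]
    exact (T.orderIsoOfFin rfl ⟨i, h⟩).2
  have heIoo : ∀ i (h : i < k), n < e i ∧ e i < mIdx := by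
    intro i h
    have := heT i h
    rw [hT, Finset.mem_filter, Finset.mem_Ioo] at this
    exact this.1
  have hemono : ∀ i i', i < i' → i' < k → e i < e i' := by
    intro i i' hii' hi'
    have hi : i < k := lt_trans hii' hi'
    rw [he]
    simp only [dif_pos hi, dif_pos hi']
    have : (⟨i, hi⟩ : Fin k) < ⟨i', hi'⟩ := hii'
    have h2 := (T.orderIsoOfFin rfl).lt_iff_lt.mpr this
    exact_mod_cast h2
  set c : ℕ → ℝ := fun i => if i = 0 then lam n else if i ≤ k then lam (e (i-1)) else lam mIdx
    with hc
  have hc0 : c 0 = lam n := by simp [hc]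
  have hcmid : ∀ i, 1 ≤ i → i ≤ k → c i = lam (e (i-1)) := by
    intro i h1 h2
    rw [hc]; simp only
    rw [if_neg (by omega), if_pos h2]
  have hcend : c (k+1) = lam mIdx := by
    rw [hc]; simp only
    rw [if_neg (by omega), if_neg (by omega)]
  have hchain : ∀ p q : ℕ, p < q → q ≤ k + 1 → c p < c q := by
    intro p q hpq hq
    rcases Nat.eq_zero_or_pos p with rfl | hp1
    · rw [hc0]
      rcases eq_or_lt_of_le hq with rfl | hq'
      · rw [hcend]; exact hmono hn
      · rw [hcmid q (by omega) (by omega)]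
        exact hmono (heIoo (q-1) (by omega)).1
    · rw [hcmid p (by omega) (by omega)]
      rcases eq_or_lt_of_le hq with rfl | hq'
      · rw [hcend]
        exact hmono (heIoo (p-1) (by omega)).2
      · rw [hcmid q (by omega) (by omega)]
        exact hmono (hemono (p-1) (q-1) (by omega) (by omega))
  have hcIcc : ∀ i ≤ k + 1, lam n ≤ c i ∧ c i ≤ lam mIdx := by
    intro i hi
    constructor
    · rcases Nat.eq_zero_or_pos i with rfl | h
      · rw [hc0]
      · rw [← hc0]; exact le_of_lt (hchain 0 i h hi)
    · rcases eq_or_lt_of_le hi with rfl | h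
      · rw [hcend]
      · rw [← hcend]; exact le_of_lt (hchain i (k+1) h (le_refl _))
  have hzero : ∀ i ≤ k + 1, Ψ (c i) = 0 := by
    intro i hi
    rcases Nat.eq_zero_or_pos i with rfl | hp1
    · rw [hc0]; exact hvanΨ _ (Or.inl (le_refl _))
    rcases eq_or_lt_of_le hi with rfl | hi'
    · rw [hcend]; exact hvanΨ _ (Or.inr (le_refl _))
    · rw [hcmid i (by omega) (by omega)]
      exact hvannodes _ (heT (i-1) (by omega))
  have hsepc : ∀ i ≤ k, ∃ w ∈ Set.Ioo (c i) (c (i + 1)), Ψ w ≠ 0 := by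
    intro i hi
    exact hsep (c i) (c (i+1)) (hcIcc i (by omega)).1 (hcIcc (i+1) (by omega)).2
      (hchain i (i+1) (by omega) (by omega))
  have hpoly' : ∀ j : ℤ, ∃ p : Polynomial ℝ, p.natDegree ≤ (s - 2) + 1 ∧
      ∀ x ∈ Set.Icc (lam j) (lam (j + 1)), Ψ x = p.eval x := by
    intro j
    obtain ⟨p, hpdeg, hp⟩ := hpoly j
    exact ⟨p, by
      have := Polynomial.natDegree_le_iff_degree_le.mpr hpdeg
      omega, hp⟩
  obtain ⟨e', hmono', hmem'⟩ := spline_zero_count hmono hpart (s-2) Ψ (lam n) (lam mIdx)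
    k c hchain hc0 hcend hzero hsepc hsm hvanΨ hpoly'
  -- convert to a count of integer nodes
  have hu : ∀ i : Fin (k + (s-2) + 1), ∃ u : ℤ, lam u = e' i := fun i => (hmem' i).2
  choose u hu using hu
  have huinj : Function.Injective u := by
    intro i i' h
    apply hmono'.injective
    rw [← hu i, ← hu i', h]
  have huIoo : ∀ i, u i ∈ Finset.Ioo n mIdx := by
    intro i
    have := (hmem' i).1
    rw [← hu i] at this
    rw [Finset.mem_Ioo]
    exact ⟨hmono.lt_iff_lt.mp this.1, hmono.lt_iff_lt.mp this.2⟩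
  have hcard : k + (s-2) + 1 ≤ (Finset.Ioo n mIdx).card := by
    calc k + (s-2) + 1 = (Finset.univ : Finset (Fin (k + (s-2) + 1))).card := by simp
      _ = (Finset.image u Finset.univ).card := (Finset.card_image_of_injective _ huinj).symm
      _ ≤ (Finset.Ioo n mIdx).card := Finset.card_le_card (by
          intro x hx
          rw [Finset.mem_image] at hx
          obtain ⟨i, _, rfl⟩ := hx
          exact huIoo i)
  rw [Int.card_Ioo] at hcard
  omega


/-- the support of the minimally supported function `Ψ_n ∈ W̃` is
`[lam n, lam (n + N_n)]`, where `N_n` is the smallest `N ≥ s` with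
`N = s + #((lam n, lam (n+N)) ∩ θΛ)`; equivalently the smallest `N` such that
`(lam n, lam (n+N))` contains exactly `s - 1` points of `Λ \ θΛ`. -/
theorem statement5 (Λ : Set ℝ) (lam : ℤ → ℝ) (θ : ℝ) (s : ℕ) (n : ℤ) (Ψ : ℝ → ℝ)
    (hΛ : Delaunay Λ) (hflc : FiniteLocalComplexity Λ)
    (hθ : 1 < θ) (hself : (fun x => θ * x) '' Λ ⊆ Λ)
    (hmono : StrictMono lam) (hrange : Set.range lam = Λ) (hs : 2 ≤ s)
    (hE : lam (n + 1) ∉ (fun x => θ * x) '' Λ)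
    (hmem : Ψ ∈ WtSpace Λ lam θ s)
    (hcs : HasCompactSupport Ψ) (hsupp : tsupport Ψ ⊆ Set.Ici (lam n))
    (hval : Ψ (lam (n + 1)) = 1)
    (hmin : ∀ f ∈ WtSpace Λ lam θ s, tsupport f ⊆ tsupport Ψ →
      ∃ c : ℝ, f = fun x => c * Ψ x) :
    ∃ N : ℕ,
      tsupport Ψ = Set.Icc (lam n) (lam (n + (N : ℤ))) ∧
      IsLeast {M : ℕ | s ≤ M ∧
        M = s + (Set.Ioo (lam n) (lam (n + (M : ℤ))) ∩ ((fun x => θ * x) '' Λ)).ncard} N ∧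
      IsLeast {M : ℕ |
        (Set.Ioo (lam n) (lam (n + (M : ℤ))) ∩ (Λ \ (fun x => θ * x) '' Λ)).ncard = s - 1} N := by
  classical
  obtain ⟨⟨hl2, hsmΨ, hpolyΨ⟩, hvanΘ⟩ := hmem
  have hmemW : Ψ ∈ WtSpace Λ lam θ s := ⟨⟨hl2, hsmΨ, hpolyΨ⟩, hvanΘ⟩
  set Θ : Set ℝ := (fun x => θ * x) '' Λ with hΘdef
  have hΘΛ : Θ ⊆ Λ := hself
  have hpart := nodes_partition hmono hrange hΛ.2
  have hcont : Continuous Ψ := hsmΨ.continuous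
  obtain ⟨mIdx, hmge, hmemA, hmemB, hSsub, hvanΨ⟩ :=
    support_endpoints hmono hpart hcont (fun j => (hpolyΨ j).imp (fun p hp => hp.2)) hcs
      hsupp hval
  have hnm : n < mIdx := by omega
  have hlamlt : lam n < lam mIdx := hmono hnm
  have hIoosub := no_gap hmemW hmin hcs hmemA hmemB hSsub
  have htsupp : tsupport Ψ = Set.Icc (lam n) (lam mIdx) := by
    apply subset_antisymm hSsub
    rw [← closure_Ioo (ne_of_lt hlamlt)]
    exact closure_minimal hIoosub (isClosed_tsupport Ψ)
  have hsep : ∀ u v : ℝ, lam n ≤ u → v ≤ lam mIdx → u < v →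
      ∃ w ∈ Set.Ioo u v, Ψ w ≠ 0 := by
    intro u v hu hv huv
    have hmid : (u+v)/2 ∈ Set.Ioo u v := ⟨by linarith, by linarith⟩
    have hmidS : (u+v)/2 ∈ tsupport Ψ := by
      rw [htsupp]
      exact ⟨le_trans hu (le_of_lt hmid.1), le_trans (le_of_lt hmid.2) hv⟩
    rw [tsupport, mem_closure_iff] at hmidS
    obtain ⟨w, hw1, hw2⟩ := hmidS (Set.Ioo u v) isOpen_Ioo hmid
    exact ⟨w, hw1, hw2⟩
  set T : Finset ℤ := (Finset.Ioo n mIdx).filter (fun i => lam i ∈ Θ) with hTdef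
  have hvannodes : ∀ i ∈ T, Ψ (lam i) = 0 := by
    intro i hi
    rw [hTdef, Finset.mem_filter] at hi
    obtain ⟨y, hy, hyeq⟩ := hi.2
    rw [← hyeq]
    exact hvanΘ y hy
  set N' : ℕ := (mIdx - n).toNat with hN'def
  have hN'cast : (N' : ℤ) = mIdx - n := Int.toNat_of_nonneg (by omega)
  have hN'1 : 1 ≤ N' := by omega
  have hmIdx : mIdx = n + (N' : ℤ) := by omega
  have hgeq := supp_ge_bound (Θ := Θ) hmono hpart hs hsmΨ hpolyΨ hvanΨ hsep hvannodes hnm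
  have hleq := supp_le_bound hmono hrange hself hs hE hval hmin N' hN'1
    (by rw [← hmIdx, htsupp])
  rw [← hmIdx, ← hΘdef] at hleq
  set k := T.card with hkdef
  have hNk : N' = s + k := by omega
  -- II.c : the last interior node is not in Θ
  have hlast : lam (mIdx - 1) ∉ Θ := by
    intro hmem1
    obtain ⟨q, hqdeg, hq⟩ := hpolyΨ (mIdx - 1)
    rw [show (mIdx - 1) + 1 = mIdx by ring] at hq
    have hu0 : Ψ (lam (mIdx - 1)) = 0 := by
      obtain ⟨y, hy, hyeq⟩ := hmem1
      rw [← hyeq]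
      exact hvanΘ y hy
    have hqz : q = 0 := last_piece_zero hs hsmΨ (hmono (by omega)) hqdeg hq
      (fun x hx => hvanΨ x (Or.inr hx)) hu0
    obtain ⟨w, hw, hwne⟩ := hsep (lam (mIdx - 1)) (lam mIdx)
      (hmono.le_iff_le.mpr (by omega)) (le_refl _) (hmono (by omega))
    apply hwne
    rw [hq w ⟨le_of_lt hw.1, le_of_lt hw.2⟩, hqz]
    simp
  -- counting identities
  have hkkM : ∀ M : ℕ, (Set.Ioo (lam n) (lam (n + (M:ℤ))) ∩ Θ).ncard
      = ((Finset.Ioo n (n + (M:ℤ))).filter (fun i => lam i ∈ Θ)).card := by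
    intro M
    have himg : Set.Ioo (lam n) (lam (n + (M:ℤ))) ∩ Θ
        = lam '' ↑((Finset.Ioo n (n + (M:ℤ))).filter (fun i => lam i ∈ Θ)) := by
      ext x
      constructor
      · rintro ⟨hx1, hx2⟩
        have hxΛ : x ∈ Λ := hΘΛ hx2
        rw [← hrange] at hxΛ
        obtain ⟨i, rfl⟩ := hxΛ
        refine ⟨i, ?_, rfl⟩
        rw [Finset.coe_filter]
        refine ⟨?_, hx2⟩
        rw [Finset.mem_Ioo]
        exact ⟨hmono.lt_iff_lt.mp hx1.1, hmono.lt_iff_lt.mp hx1.2⟩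
      · rintro ⟨i, hi, rfl⟩
        rw [Finset.coe_filter] at hi
        obtain ⟨hi1, hi2⟩ := hi
        rw [Finset.mem_Ioo] at hi1
        exact ⟨⟨hmono hi1.1, hmono hi1.2⟩, hi2⟩
    rw [himg, Set.ncard_image_of_injective _ hmono.injective, Set.ncard_coe_finset]
  have hcountM : ∀ M : ℕ, 1 ≤ M →
      ((Finset.Ioo n (n + (M:ℤ))).filter (fun i => lam i ∈ Θ)).card
        + (Set.Ioo (lam n) (lam (n + (M:ℤ))) ∩ (Λ \ Θ)).ncard = M - 1 := by
    intro M hM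
    have hunion : Set.Ioo (lam n) (lam (n + (M:ℤ))) ∩ Λ
        = (Set.Ioo (lam n) (lam (n + (M:ℤ))) ∩ Θ) ∪
          (Set.Ioo (lam n) (lam (n + (M:ℤ))) ∩ (Λ \ Θ)) := by
      ext x
      constructor
      · rintro ⟨hx1, hx2⟩
        by_cases hxΘ : x ∈ Θ
        · exact Or.inl ⟨hx1, hxΘ⟩
        · exact Or.inr ⟨hx1, hx2, hxΘ⟩
      · rintro (⟨hx1, hx2⟩ | ⟨hx1, hx2⟩)
        · exact ⟨hx1, hΘΛ hx2⟩
        · exact ⟨hx1, hx2.1⟩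
    have hdisj : Disjoint (Set.Ioo (lam n) (lam (n + (M:ℤ))) ∩ Θ)
        (Set.Ioo (lam n) (lam (n + (M:ℤ))) ∩ (Λ \ Θ)) := by
      rw [Set.disjoint_iff]
      rintro x ⟨⟨-, h1⟩, ⟨-, -, h2⟩⟩
      exact h2 h1
    have hfin : (Set.Ioo (lam n) (lam (n + (M:ℤ))) ∩ Λ).Finite :=
      nodes_Ioo_finite hmono hrange n (n + (M:ℤ))
    have hfin1 : (Set.Ioo (lam n) (lam (n + (M:ℤ))) ∩ Θ).Finite :=
      hfin.subset (by intro x hx; exact ⟨hx.1, hΘΛ hx.2⟩)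
    have hfin2 : (Set.Ioo (lam n) (lam (n + (M:ℤ))) ∩ (Λ \ Θ)).Finite :=
      hfin.subset (by intro x hx; exact ⟨hx.1, hx.2.1⟩)
    have hcard := ncard_nodes hmono hrange n (n + (M:ℤ))
    rw [hunion] at hcard
    rw [Set.ncard_union_eq hdisj hfin1 hfin2] at hcard
    rw [hkkM M] at hcard
    rw [hcard]
    omega
  have hTN : T = (Finset.Ioo n (n + (N':ℤ))).filter (fun i => lam i ∈ Θ) := by
    rw [hTdef, ← hmIdx]
  have hfinD : ∀ M : ℕ, (Set.Ioo (lam n) (lam (n + (M:ℤ))) ∩ (Λ \ Θ)).Finite := by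
    intro M
    exact (nodes_Ioo_finite hmono hrange n (n + (M:ℤ))).subset
      (by intro x hx; exact ⟨hx.1, hx.2.1⟩)
  have hddN' : (Set.Ioo (lam n) (lam (n + (N':ℤ))) ∩ (Λ \ Θ)).ncard = s - 1 := by
    have h1 := hcountM N' hN'1
    rw [← hTN] at h1
    omega
  have hddmono : ∀ M M' : ℕ, M ≤ M' →
      (Set.Ioo (lam n) (lam (n + (M:ℤ))) ∩ (Λ \ Θ)).ncard ≤
      (Set.Ioo (lam n) (lam (n + (M':ℤ))) ∩ (Λ \ Θ)).ncard := by
    intro M M' h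
    apply Set.ncard_le_ncard _ (hfinD M')
    intro x hx
    exact ⟨⟨hx.1.1, lt_of_lt_of_le hx.1.2 (hmono.le_iff_le.mpr (by omega))⟩, hx.2⟩
  have hN'2 : 2 ≤ N' := by omega
  have hstep : (Set.Ioo (lam n) (lam (n + ((N'-1:ℕ):ℤ))) ∩ (Λ \ Θ)).ncard + 1 ≤
      (Set.Ioo (lam n) (lam (n + (N':ℤ))) ∩ (Λ \ Θ)).ncard := by
    have hpt : lam (mIdx - 1) ∈ Set.Ioo (lam n) (lam (n + (N':ℤ))) ∩ (Λ \ Θ) := by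
      refine ⟨⟨hmono (by omega), hmono (by omega)⟩, ?_, hlast⟩
      rw [← hrange]
      exact ⟨mIdx - 1, rfl⟩
    have hsub : insert (lam (mIdx - 1))
        (Set.Ioo (lam n) (lam (n + ((N'-1 : ℕ):ℤ))) ∩ (Λ \ Θ))
        ⊆ Set.Ioo (lam n) (lam (n + (N':ℤ))) ∩ (Λ \ Θ) := by
      intro x hx
      rcases Set.mem_insert_iff.mp hx with rfl | hx
      · exact hpt
      · exact ⟨⟨hx.1.1, lt_of_lt_of_le hx.1.2 (hmono.le_iff_le.mpr (by omega))⟩, hx.2⟩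
    have hnotmem : lam (mIdx - 1) ∉
        Set.Ioo (lam n) (lam (n + ((N'-1:ℕ):ℤ))) ∩ (Λ \ Θ) := by
      rintro ⟨⟨-, hlt⟩, -⟩
      rw [show n + ((N'-1:ℕ):ℤ) = mIdx - 1 by omega] at hlt
      exact lt_irrefl _ hlt
    calc (Set.Ioo (lam n) (lam (n + ((N'-1:ℕ):ℤ))) ∩ (Λ \ Θ)).ncard + 1
        = (insert (lam (mIdx - 1))
            (Set.Ioo (lam n) (lam (n + ((N'-1 : ℕ):ℤ))) ∩ (Λ \ Θ))).ncard := by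
          rw [Set.ncard_insert_of_notMem hnotmem (hfinD (N'-1))]
      _ ≤ _ := Set.ncard_le_ncard hsub (hfinD N')
  have hlow : ∀ M : ℕ,
      (Set.Ioo (lam n) (lam (n + (M:ℤ))) ∩ (Λ \ Θ)).ncard = s - 1 → N' ≤ M := by
    intro M hM
    by_contra hc
    push_neg at hc
    have hM1 : 1 ≤ M := by
      by_contra h0
      push_neg at h0
      interval_cases M
      simp only [Nat.cast_zero, add_zero, Set.Ioo_self, Set.empty_inter,
        Set.ncard_empty] at hM
      omega
    have h1 := hddmono M (N'-1) (by omega)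
    omega
  have hiff : ∀ M : ℕ,
      (s ≤ M ∧ M = s + (Set.Ioo (lam n) (lam (n + (M:ℤ))) ∩ Θ).ncard) ↔
      (Set.Ioo (lam n) (lam (n + (M:ℤ))) ∩ (Λ \ Θ)).ncard = s - 1 := by
    intro M
    rcases Nat.eq_zero_or_pos M with rfl | hM1
    · constructor
      · rintro ⟨h, -⟩
        omega
      · intro h
        simp only [Nat.cast_zero, add_zero, Set.Ioo_self, Set.empty_inter,
          Set.ncard_empty] at h
        omega
    · have hcnt := hcountM M hM1
      rw [hkkM M]
      constructor
      · rintro ⟨hsM, heq⟩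
        omega
      · intro h
        constructor <;> omega
  refine ⟨N', ?_, ?_, ?_⟩
  · rw [htsupp, hmIdx]
  · constructor
    · exact (hiff N').mpr hddN'
    · intro M hM
      exact hlow M ((hiff M).mp hM)
  · constructor
    · exact hddN'
    · intro M hM
      exact hlow M hM

end
end

section
/- Let a ≥ 3 be an integer and β = (a + √(a² − 4))/2, so that β² = aβ − 1. Then for every x ∈ ℝ: (i) 𝟙_{[0,1)}(x) = Σ_{l=0}^{a−2} 𝟙_{[0,1)}(βx − l) + 𝟙_{[0,1−1/β)}(βx − (a−1)); (ii) 𝟙_{[0,1−1/β)}(x) = Σ_{l=0}^{a−3} 𝟙_{[0,1)}(βx − l) + 𝟙_{[0,1−1/β)}(βx − (a−2)). These are the Haar refinement (scaling) equations for the scaling functions on the β-integer tiling with tiles of lengths 1 (L) and 1 − 1/β (S). -/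
open MeasureTheory Set

noncomputable section

lemma ind_split (c t : ℝ) (hc : 1 ≤ c) :
    Set.indicator (Set.Ico (0 : ℝ) c) (fun _ => (1 : ℝ)) t =
      Set.indicator (Set.Ico (0 : ℝ) 1) (fun _ => (1 : ℝ)) t +
      Set.indicator (Set.Ico (0 : ℝ) (c - 1)) (fun _ => (1 : ℝ)) (t - 1) := by
  have hU : Set.Ico (0 : ℝ) 1 ∪ Set.Ico (1 : ℝ) c = Set.Ico (0 : ℝ) c :=
    Set.Ico_union_Ico_eq_Ico (by norm_num) hc
  have hdisj : Disjoint (Set.Ico (0 : ℝ) 1) (Set.Ico (1 : ℝ) c) :=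
    Set.Ico_disjoint_Ico_same
  have h2 : Set.indicator (Set.Ico (1 : ℝ) c) (fun _ => (1 : ℝ)) t =
      Set.indicator (Set.Ico (0 : ℝ) (c - 1)) (fun _ => (1 : ℝ)) (t - 1) := by
    have hiff : t ∈ Set.Ico (1 : ℝ) c ↔ t - 1 ∈ Set.Ico (0 : ℝ) (c - 1) := by
      simp only [Set.mem_Ico]
      constructor <;> rintro ⟨u, v⟩ <;> constructor <;> linarith
    simp only [Set.indicator_apply]
    exact if_congr hiff rfl rfl
  rw [← hU, Set.indicator_union_of_disjoint hdisj]
  simp only [Pi.add_apply]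
  rw [h2]

lemma ind_sum (n : ℕ) : ∀ (c t : ℝ), (n : ℝ) ≤ c →
    Set.indicator (Set.Ico (0 : ℝ) c) (fun _ => (1 : ℝ)) t =
      (∑ l ∈ Finset.range n,
        Set.indicator (Set.Ico (0 : ℝ) 1) (fun _ => (1 : ℝ)) (t - (l : ℝ))) +
      Set.indicator (Set.Ico (0 : ℝ) (c - (n : ℝ))) (fun _ => (1 : ℝ)) (t - (n : ℝ)) := by
  induction n with
  | zero => intro c t _; simp
  | succ n ih =>
    intro c t hc
    have hc' : (n : ℝ) ≤ c - 1 := by push_cast at hc ⊢; linarith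
    have h1 : (1 : ℝ) ≤ c := by
      push_cast at hc; have : (0:ℝ) ≤ n := Nat.cast_nonneg n; linarith
    rw [ind_split c t h1, ih (c - 1) (t - 1) hc', Finset.sum_range_succ']
    have hsum : ∑ l ∈ Finset.range n,
        Set.indicator (Set.Ico (0 : ℝ) 1) (fun _ => (1 : ℝ)) (t - 1 - (l : ℝ))
        = ∑ l ∈ Finset.range n,
        Set.indicator (Set.Ico (0 : ℝ) 1) (fun _ => (1 : ℝ)) (t - ((l + 1 : ℕ) : ℝ)) := by
      refine Finset.sum_congr rfl fun l _ => ?_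
      congr 1; push_cast; ring
    rw [hsum]
    have e2 : c - 1 - (n : ℝ) = c - ((n + 1 : ℕ) : ℝ) := by push_cast; ring
    have e3 : t - 1 - (n : ℝ) = t - ((n + 1 : ℕ) : ℝ) := by push_cast; ring
    rw [e2, e3]
    simp only [Nat.cast_zero, sub_zero]
    ring

lemma ind_scale (β d x : ℝ) (hβ : 0 < β) :
    Set.indicator (Set.Ico (0 : ℝ) d) (fun _ => (1 : ℝ)) x =
      Set.indicator (Set.Ico (0 : ℝ) (β * d)) (fun _ => (1 : ℝ)) (β * x) := by
  have key : (0 ≤ x ∧ x < d) ↔ (0 ≤ β * x ∧ β * x < β * d) := by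
    constructor <;> rintro ⟨u, v⟩ <;> constructor <;> nlinarith
  simp only [Set.indicator_apply, Set.mem_Ico]
  exact if_congr key rfl rfl

/-- Haar refinement equations for the β-integer tiling, case
`β² = aβ - 1`, `a ≥ 3`, with tiles of lengths `1` (L) and `1 - 1/β` (S). -/
theorem statement18 (a : ℕ) (ha : 3 ≤ a) (β : ℝ)
    (hβ : β = ((a : ℝ) + Real.sqrt ((a : ℝ) ^ 2 - 4)) / 2) :
    (∀ x : ℝ,
      Set.indicator (Set.Ico (0 : ℝ) 1) (fun _ => (1 : ℝ)) x =
        (∑ l ∈ Finset.range (a - 1),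
          Set.indicator (Set.Ico (0 : ℝ) 1) (fun _ => (1 : ℝ)) (β * x - (l : ℝ))) +
        Set.indicator (Set.Ico (0 : ℝ) (1 - 1 / β)) (fun _ => (1 : ℝ))
          (β * x - ((a : ℝ) - 1))) ∧
    (∀ x : ℝ,
      Set.indicator (Set.Ico (0 : ℝ) (1 - 1 / β)) (fun _ => (1 : ℝ)) x =
        (∑ l ∈ Finset.range (a - 2),
          Set.indicator (Set.Ico (0 : ℝ) 1) (fun _ => (1 : ℝ)) (β * x - (l : ℝ))) +
        Set.indicator (Set.Ico (0 : ℝ) (1 - 1 / β)) (fun _ => (1 : ℝ))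
          (β * x - ((a : ℝ) - 2))) := by
  have ha3 : (3 : ℝ) ≤ (a : ℝ) := by exact_mod_cast ha
  have hs0 : (0 : ℝ) ≤ (a : ℝ) ^ 2 - 4 := by nlinarith
  have hs : Real.sqrt ((a : ℝ) ^ 2 - 4) ^ 2 = (a : ℝ) ^ 2 - 4 := Real.sq_sqrt hs0
  have hsnn : 0 ≤ Real.sqrt ((a : ℝ) ^ 2 - 4) := Real.sqrt_nonneg _
  have hβ1 : (3 : ℝ) / 2 ≤ β := by rw [hβ]; linarith
  have hβpos : 0 < β := by linarith
  have hβne : β ≠ 0 := ne_of_gt hβpos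
  have hquad : β ^ 2 = (a : ℝ) * β - 1 := by rw [hβ]; field_simp; nlinarith [hs]
  have hinv : 1 / β = (a : ℝ) - β := by
    field_simp
    nlinarith [hquad]
  have hβge : (a : ℝ) - 1 ≤ β := by
    have h1 : 1 / β ≤ 1 := by rw [div_le_one hβpos]; linarith
    linarith [hinv]
  constructor
  · intro x
    have hcast : ((a - 1 : ℕ) : ℝ) = (a : ℝ) - 1 := by
      rw [Nat.cast_sub (by omega : 1 ≤ a)]; norm_num
    have key := ind_sum (a - 1) β (β * x) (by rw [hcast]; linarith)
    rw [ind_scale β 1 x hβpos, mul_one, key, hcast]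
    have h : β - ((a : ℝ) - 1) = 1 - 1 / β := by rw [hinv]; ring
    rw [h]
  · intro x
    have hd : β * (1 - 1 / β) = β - 1 := by field_simp
    have hcast : ((a - 2 : ℕ) : ℝ) = (a : ℝ) - 2 := by
      rw [Nat.cast_sub (by omega : 2 ≤ a)]; norm_num
    have key := ind_sum (a - 2) (β - 1) (β * x) (by rw [hcast]; linarith)
    rw [ind_scale β (1 - 1 / β) x hβpos, hd, key, hcast]
    have h : β - 1 - ((a : ℝ) - 2) = 1 - 1 / β := by rw [hinv]; ring
    rw [h]
end
end
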